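/- arXiv:1905.09981 — 9 statements merged into one kernel-verified Lean document; each statement's English description precedes it below -/
import Mathlib

section
/- Let ν be a probability measure on E × M with first marginal m, with disintegration {ν_α : α ∈ E} with respect to m. Let 𝒫 be the Markov operator of the transition probability p̂((α,x),B) = ∫ 1_B(β, f_β(x)) p(α,dβ), and let q be the transition probability in duality with p relative to m. Then 𝒫ν has first marginal m and its disintegration with respect to m satisfies (𝒫ν)_α = ∫ (f_α)_*ν_β q(α,dβ) for m-almost every α. -/
open MeasureTheory ProbabilityTheory ENNReal

/-- A family `να` is a disintegration of `ν` with respect to `m` (first marginal on `E`). -/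
def IsDisint {E M : Type*} [MeasurableSpace E] [MeasurableSpace M]
    (m : Measure E) (ν : Measure (E × M)) (να : E → Measure M) : Prop :=
  (∀ α, IsProbabilityMeasure (να α)) ∧
  (∀ B : Set M, MeasurableSet B → Measurable fun α => να α B) ∧
  (∀ (A : Set E) (B : Set M), MeasurableSet A → MeasurableSet B →
    ν (A ×ˢ B) = ∫⁻ α in A, να α B ∂m)

/-- If `ν` has first marginal `m`, then `𝒫ν` has first marginal `m` and
its disintegration with respect to `m` is `(𝒫ν)_α = ∫ (f_α)_* ν_β q(α,dβ)`. -/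
theorem markov_operator_disintegration {E M : Type*}
    [MeasurableSpace E] [StandardBorelSpace E] [MeasurableSpace M] [StandardBorelSpace M]
    (p q : ProbabilityTheory.Kernel E E) [IsMarkovKernel p] [IsMarkovKernel q]
    (m : Measure E) [IsProbabilityMeasure m]
    (hstat : ∀ A : Set E, MeasurableSet A → m A = ∫⁻ α, p α A ∂m)
    (huniq : ∀ m' : Measure E, IsProbabilityMeasure m' →
      (∀ A : Set E, MeasurableSet A → m' A = ∫⁻ α, p α A ∂m') → m' = m)
    (hdual : ∀ A B : Set E, MeasurableSet A → MeasurableSet B →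
      ∫⁻ α in B, p α A ∂m = ∫⁻ β in A, q β B ∂m)
    (f : E → M → M) (hf : Measurable fun z : E × M => f z.1 z.2)
    (phat : ProbabilityTheory.Kernel (E × M) (E × M)) [IsMarkovKernel phat]
    (hphat : ∀ (z : E × M) (B : Set (E × M)), MeasurableSet B →
      phat z B = ∫⁻ β, B.indicator (fun _ => (1 : ℝ≥0∞)) (β, f β z.2) ∂(p z.1))
    (ν : Measure (E × M)) [IsProbabilityMeasure ν]
    (hmarg : ν.map Prod.fst = m)
    (να : E → Measure M) (hdis : IsDisint m ν να) :
    (ν.bind (fun z => phat z)).map Prod.fst = m ∧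
    IsDisint m (ν.bind (fun z => phat z))
      (fun α => (q α : Measure E).bind (fun β => (να β).map (f α))) := by
  classical
  obtain ⟨hprob, hmeasB, hrect⟩ := hdis
  haveI : ∀ β, IsProbabilityMeasure (να β) := hprob
  have hfα : ∀ α, Measurable (f α) := fun α => hf.comp measurable_prodMk_left
  -- the disintegration as a kernel
  have hκm : Measurable να := Measure.measurable_of_measurable_coe _ hmeasB
  let κ : Kernel E M := ⟨να, hκm⟩
  have hκ : ∀ α, κ α = να α := fun _ => rfl
  haveI hκM : IsMarkovKernel κ := ⟨fun α => hprob α⟩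
  let pF : Kernel (E × M) E := p.comap Prod.fst measurable_fst
  haveI : IsMarkovKernel pF := Kernel.IsMarkovKernel.comap p measurable_fst
  let κF : Kernel (E × E) M := κ.comap Prod.fst measurable_fst
  haveI : IsMarkovKernel κF := Kernel.IsMarkovKernel.comap κ measurable_fst
  let κS : Kernel (E × E) M := κ.comap Prod.snd measurable_snd
  haveI : IsMarkovKernel κS := Kernel.IsMarkovKernel.comap κ measurable_snd
  -- ν = m ⊗ₘ κ
  have hν : ν = m.compProd κ := by
    refine ext_of_generate_finite _ generateFrom_prod.symm isPiSystem_prod ?_ ?_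
    · rintro _ ⟨s, hs, t, ht, rfl⟩
      rw [Measure.compProd_apply_prod hs ht, hrect s t hs ht]
      rfl
    · rw [Measure.compProd_apply_univ, measure_univ, measure_univ]
  -- duality as an equality of measures on E × E
  have hqp : m.compProd q = (m.compProd p).map Prod.swap := by
    refine ext_of_generate_finite _ generateFrom_prod.symm isPiSystem_prod ?_ ?_
    · rintro _ ⟨s, hs, t, ht, rfl⟩
      rw [Measure.compProd_apply_prod hs ht,
        Measure.map_apply measurable_swap (hs.prod ht), Set.preimage_swap_prod,
        Measure.compProd_apply_prod ht hs]
      exact (hdual s t hs ht).symm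
    · rw [Measure.compProd_apply_univ,
        Measure.map_apply measurable_swap MeasurableSet.univ, Set.preimage_univ,
        Measure.compProd_apply_univ]
  -- measurability of the bound measures
  have hmapm : ∀ α, Measurable fun β => (να β).map (f α) :=
    fun α => (Measure.measurable_map _ (hfα α)).comp hκm
  -- pointwise description of the candidate disintegration
  have keyfun : ∀ (B : Set M), MeasurableSet B → ∀ (α β : E),
      να β ((f α) ⁻¹' B) = ∫⁻ x, B.indicator (fun _ => (1 : ℝ≥0∞)) (f α x) ∂(να β) := by
    intro B hB α β
    rw [← lintegral_indicator_one ((hfα α) hB)]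
    refine lintegral_congr fun x => ?_
    by_cases h : f α x ∈ B <;> simp [Set.indicator, h]
  have hμB : ∀ (B : Set M), MeasurableSet B → ∀ α : E,
      ((q α : Measure E).bind (fun β => (να β).map (f α))) B
        = ∫⁻ β, ∫⁻ x, B.indicator (fun _ => (1 : ℝ≥0∞)) (f α x) ∂(να β) ∂(q α) := by
    intro B hB α
    rw [Measure.bind_apply hB (hmapm α).aemeasurable]
    refine lintegral_congr fun β => ?_
    rw [Measure.map_apply (hfα α) hB, keyfun B hB α β]
  -- the key rectangle computation
  have key : ∀ (A : Set E) (B : Set M), MeasurableSet A → MeasurableSet B →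
      (ν.bind (fun z => phat z)) (A ×ˢ B)
        = ∫⁻ α in A, ∫⁻ β, ∫⁻ x, B.indicator (fun _ => (1 : ℝ≥0∞)) (f α x) ∂(να β) ∂(q α) ∂m := by
    intro A B hA hB
    have hindB : Measurable (B.indicator (fun _ => (1 : ℝ≥0∞))) :=
      measurable_const.indicator hB
    have hindA : Measurable (A.indicator (fun _ => (1 : ℝ≥0∞))) :=
      measurable_const.indicator hA
    rw [Measure.bind_apply (hA.prod hB) phat.measurable.aemeasurable]
    -- split the indicator
    have h2 : ∀ z : E × M, phat z (A ×ˢ B)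
        = ∫⁻ β, A.indicator (fun _ => (1 : ℝ≥0∞)) β
            * B.indicator (fun _ => (1 : ℝ≥0∞)) (f β z.2) ∂(p z.1) := by
      intro z
      rw [hphat z _ (hA.prod hB)]
      refine lintegral_congr fun β => ?_
      by_cases h1 : β ∈ A <;> by_cases h2 : f β z.2 ∈ B <;> simp [h1, h2]
    simp_rw [h2]
    -- pass to the disintegration
    have hF : Measurable fun z : E × M => ∫⁻ β, A.indicator (fun _ => (1 : ℝ≥0∞)) β
        * B.indicator (fun _ => (1 : ℝ≥0∞)) (f β z.2) ∂(p z.1) := by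
      refine Measurable.lintegral_kernel_prod_right (κ := pF) ?_
      exact (hindA.comp measurable_snd).mul
        (hindB.comp (hf.comp (measurable_snd.prodMk (measurable_snd.comp measurable_fst))))
    rw [hν, Measure.lintegral_compProd hF]
    -- swap the two inner integrals
    have h4 : ∀ α : E, ∫⁻ x, ∫⁻ β, A.indicator (fun _ => (1 : ℝ≥0∞)) β
          * B.indicator (fun _ => (1 : ℝ≥0∞)) (f β x) ∂(p α) ∂(κ α)
        = ∫⁻ β, A.indicator (fun _ => (1 : ℝ≥0∞)) β
            * ∫⁻ x, B.indicator (fun _ => (1 : ℝ≥0∞)) (f β x) ∂(να α) ∂(p α) := by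
      intro α
      rw [hκ α]
      rw [lintegral_lintegral_swap]
      · refine lintegral_congr fun β => ?_
        exact lintegral_const_mul _ (hindB.comp (hf.comp measurable_prodMk_left))
      · exact ((hindA.comp measurable_snd).mul
          (hindB.comp (hf.comp (measurable_snd.prodMk measurable_fst)))).aemeasurable
    simp_rw [h4]
    -- rewrite as an integral over m ⊗ₘ p and use duality
    have hinner : Measurable fun w : E × E =>
        ∫⁻ x, B.indicator (fun _ => (1 : ℝ≥0∞)) (f w.2 x) ∂(να w.1) := by
      refine Measurable.lintegral_kernel_prod_right (κ := κF) ?_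
      exact hindB.comp (hf.comp ((measurable_snd.comp measurable_fst).prodMk measurable_snd))
    have hH : Measurable fun w : E × E => A.indicator (fun _ => (1 : ℝ≥0∞)) w.2
        * ∫⁻ x, B.indicator (fun _ => (1 : ℝ≥0∞)) (f w.2 x) ∂(να w.1) := by
      exact (hindA.comp measurable_snd).mul hinner
    have hHs : Measurable fun w : E × E => A.indicator (fun _ => (1 : ℝ≥0∞)) w.1
        * ∫⁻ x, B.indicator (fun _ => (1 : ℝ≥0∞)) (f w.1 x) ∂(να w.2) := hH.comp measurable_swap
    have hswap : ∫⁻ w : E × E, A.indicator (fun _ => (1 : ℝ≥0∞)) w.2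
          * ∫⁻ x, B.indicator (fun _ => (1 : ℝ≥0∞)) (f w.2 x) ∂(να w.1) ∂(m.compProd p)
        = ∫⁻ w : E × E, A.indicator (fun _ => (1 : ℝ≥0∞)) w.1
          * ∫⁻ x, B.indicator (fun _ => (1 : ℝ≥0∞)) (f w.1 x) ∂(να w.2) ∂(m.compProd q) := by
      rw [hqp, lintegral_map hHs measurable_swap]
      simp only [Prod.fst_swap, Prod.snd_swap]
    rw [← Measure.lintegral_compProd hH, hswap, Measure.lintegral_compProd hHs]
    -- pull out the indicator and conclude
    have h8 : ∀ α : E, ∫⁻ β, A.indicator (fun _ => (1 : ℝ≥0∞)) α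
          * ∫⁻ x, B.indicator (fun _ => (1 : ℝ≥0∞)) (f α x) ∂(να β) ∂(q α)
        = A.indicator (fun α => ∫⁻ β, ∫⁻ x,
            B.indicator (fun _ => (1 : ℝ≥0∞)) (f α x) ∂(να β) ∂(q α)) α := by
      intro α
      by_cases h : α ∈ A <;> simp [h]
    simp_rw [h8]
    rw [lintegral_indicator hA]
  refine ⟨?_, ?_, ?_, ?_⟩
  · -- first marginal is m
    ext A hA
    rw [Measure.map_apply measurable_fst hA, ← Set.prod_univ,
      key A Set.univ hA MeasurableSet.univ]
    simp only [Set.indicator_univ, lintegral_one, measure_univ, setLIntegral_one,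
      Measure.restrict_apply_univ]
  · -- probability measures
    intro α
    constructor
    rw [hμB Set.univ MeasurableSet.univ α]
    simp only [Set.indicator_univ, lintegral_one, measure_univ]
  · -- measurability
    intro B hB
    have : (fun α => ((q α : Measure E).bind fun β => (να β).map (f α)) B)
        = fun α => ∫⁻ β, ∫⁻ x, B.indicator (fun _ => (1 : ℝ≥0∞)) (f α x)
            ∂(κS (α, β)) ∂(q α) := by
      funext α; rw [hμB B hB α]; rfl
    rw [this]
    refine Measurable.lintegral_kernel_prod_right (κ := q) ?_
    refine Measurable.lintegral_kernel_prod_right ?_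
    exact (measurable_const.indicator hB).comp
      (hf.comp ((measurable_fst.comp measurable_fst).prodMk measurable_snd))
  · -- rectangles
    intro A B hA hB
    rw [key A B hA hB]
    refine lintegral_congr fun α => ?_
    rw [hμB B hB α]
end

section
/- Let ν be a probability measure on E × M with first marginal m and disintegration {ν_α} with respect to m. Then ν is a stationary measure of the transition probability p̂ (i.e. 𝒫ν = ν) if and only if ν_α = ∫ (f_α)_*ν_β q(α,dβ) for m-almost every α. -/
open MeasureTheory ProbabilityTheory ENNReal

/-- A probability measure `ν` on `E × M` with first marginal `m` is
stationary for `p̂` iff `ν_α = ∫ (f_α)_* ν_β q(α,dβ)` for `m`-almost every `α`. -/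
theorem stationary_iff_disintegration {E M : Type*}
    [MeasurableSpace E] [StandardBorelSpace E] [MeasurableSpace M] [StandardBorelSpace M]
    (p q : ProbabilityTheory.Kernel E E) [IsMarkovKernel p] [IsMarkovKernel q]
    (m : Measure E) [IsProbabilityMeasure m]
    (hstat : ∀ A : Set E, MeasurableSet A → m A = ∫⁻ α, p α A ∂m)
    (huniq : ∀ m' : Measure E, IsProbabilityMeasure m' →
      (∀ A : Set E, MeasurableSet A → m' A = ∫⁻ α, p α A ∂m') → m' = m)
    (hdual : ∀ A B : Set E, MeasurableSet A → MeasurableSet B →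
      ∫⁻ α in B, p α A ∂m = ∫⁻ β in A, q β B ∂m)
    (f : E → M → M) (hf : Measurable fun z : E × M => f z.1 z.2)
    (phat : ProbabilityTheory.Kernel (E × M) (E × M)) [IsMarkovKernel phat]
    (hphat : ∀ (z : E × M) (B : Set (E × M)), MeasurableSet B →
      phat z B = ∫⁻ β, B.indicator (fun _ => (1 : ℝ≥0∞)) (β, f β z.2) ∂(p z.1))
    (ν : Measure (E × M)) [IsProbabilityMeasure ν]
    (hmarg : ν.map Prod.fst = m)
    (να : E → Measure M) (hdis : IsDisint m ν να) :
    (∀ B : Set (E × M), MeasurableSet B → ν B = ∫⁻ z, phat z B ∂ν) ↔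
      (∀ᵐ α ∂m, να α = (q α : Measure E).bind (fun β => (να β).map (f α))) := by
  classical
  obtain ⟨hprob, hmeas, hrect⟩ := hdis
  have hEne : Nonempty E := by
    by_contra h
    rw [not_nonempty_iff] at h
    have h1 : m Set.univ = 1 := measure_univ
    rw [Set.univ_eq_empty_iff.mpr h, measure_empty] at h1
    exact zero_ne_one h1
  obtain ⟨α₀⟩ := hEne
  have hMne : Nonempty M := by
    by_contra h
    rw [not_nonempty_iff] at h
    have h1 : να α₀ Set.univ = 1 := (hprob α₀).measure_univ
    rw [Set.univ_eq_empty_iff.mpr h, measure_empty] at h1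
    exact zero_ne_one h1
  have hfα : ∀ α, Measurable (f α) := fun α => hf.comp measurable_prodMk_left
  -- the disintegration as a Markov kernel
  let κ : Kernel E M := ⟨να, Measure.measurable_of_measurable_coe _ hmeas⟩
  have hκap : ∀ α, κ α = να α := fun _ => rfl
  haveI : IsMarkovKernel κ := ⟨fun α => hprob α⟩
  have hmapmeas : ∀ α, Measurable fun β => (να β).map (f α) :=
    fun α => (Measure.measurable_map _ (hfα α)).comp κ.measurable
  -- measurability of the bind family
  have hbmeas : Measurable fun α => (q α).bind (fun β => (να β).map (f α)) := by
    apply Measure.measurable_of_measurable_coe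
    intro C hC
    have hG := Measurable.lintegral_kernel_prod_right'
      (κ := κ.comap (Prod.snd : E × E → E) measurable_snd)
      (f := fun (u : (E × E) × M) => C.indicator (fun _ => (1 : ℝ≥0∞)) (f u.1.1 u.2))
      (by exact (measurable_const.indicator hC).comp (hf.comp ((measurable_fst.fst).prodMk measurable_snd)))
    simp only [Kernel.comap_apply, hκap] at hG
    have heq : ∀ α, (q α).bind (fun β => (να β).map (f α)) C
        = ∫⁻ β, (∫⁻ x, C.indicator (fun _ => (1 : ℝ≥0∞)) (f α x) ∂(να β)) ∂(q α) := by
      intro α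
      rw [Measure.bind_apply hC (hmapmeas α).aemeasurable]
      refine lintegral_congr fun β => ?_
      rw [Measure.map_apply (hfα α) hC, ← lintegral_indicator_one ((hfα α) hC)]
      refine lintegral_congr fun x => ?_
      by_cases hx : f α x ∈ C <;> simp [hx]
    simp_rw [heq]
    exact Measurable.lintegral_kernel_prod_right' (κ := q) hG
  let κ' : Kernel E M := ⟨fun α => (q α).bind (fun β => (να β).map (f α)), hbmeas⟩
  have hκ'ap : ∀ α, κ' α = (q α).bind (fun β => (να β).map (f α)) := fun _ => rfl
  haveI : IsMarkovKernel κ' := by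
    refine ⟨fun α => ⟨?_⟩⟩
    rw [hκ'ap, Measure.bind_apply MeasurableSet.univ (hmapmeas α).aemeasurable]
    have : ∀ β, (να β).map (f α) Set.univ = 1 := by
      intro β
      rw [Measure.map_apply (hfα α) MeasurableSet.univ, Set.preimage_univ,
        (hprob β).measure_univ]
    simp_rw [this, lintegral_one, measure_univ]
  -- ν is the composition of m with κ
  have hν : ν = m ⊗ₘ κ := by
    refine ext_of_generate_finite _ generateFrom_prod.symm isPiSystem_prod ?_ ?_
    · rintro _ ⟨A, hA, C, hC, rfl⟩
      rw [Measure.compProd_apply_prod hA hC, hrect A C hA hC]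
      exact lintegral_congr fun α => rfl
    · rw [Measure.compProd_apply_univ, measure_univ, measure_univ]
  -- duality as an equality of measures on E × E
  have hswap : m ⊗ₘ p = (m ⊗ₘ q).map Prod.swap := by
    refine ext_of_generate_finite _ generateFrom_prod.symm isPiSystem_prod ?_ ?_
    · rintro _ ⟨S, hS, T, hT, rfl⟩
      rw [Measure.compProd_apply_prod hS hT,
        Measure.map_apply measurable_swap (hS.prod hT), Set.preimage_swap_prod,
        Measure.compProd_apply_prod hT hS]
      exact hdual T S hT hS
    · rw [Measure.map_apply measurable_swap MeasurableSet.univ, Set.preimage_univ,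
        measure_univ, measure_univ]
  -- the key computation
  have key : ∀ B : Set (E × M), MeasurableSet B →
      ∫⁻ z, phat z B ∂ν = (m ⊗ₘ κ') B := by
    intro B hB
    set H : E × E → ℝ≥0∞ :=
      fun c => ∫⁻ x, B.indicator (fun _ => (1 : ℝ≥0∞)) (c.2, f c.2 x) ∂(να c.1) with hHdef
    have hH : Measurable H := by
      have h := Measurable.lintegral_kernel_prod_right'
        (κ := κ.comap (Prod.fst : E × E → E) measurable_fst)
        (f := fun (u : (E × E) × M) => B.indicator (fun _ => (1 : ℝ≥0∞)) (u.1.2, f u.1.2 u.2))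
        (by exact (measurable_const.indicator hB).comp ((measurable_fst.snd).prodMk (hf.comp ((measurable_fst.snd).prodMk measurable_snd))))
      simpa only [Kernel.comap_apply, hκap] using h
    have h1 : ∀ α, ∫⁻ x, phat (α, x) B ∂κ α = ∫⁻ β, H (α, β) ∂p α := by
      intro α
      haveI : IsProbabilityMeasure (κ α) := hprob α
      have e1 : ∫⁻ x, phat (α, x) B ∂κ α
          = ∫⁻ x, ∫⁻ β, B.indicator (fun _ => (1 : ℝ≥0∞)) (β, f β x) ∂p α ∂κ α :=
        lintegral_congr fun x => hphat (α, x) B hB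
      have hu : Measurable (Function.uncurry fun (x : M) (β : E) =>
          B.indicator (fun _ => (1 : ℝ≥0∞)) (β, f β x)) := by
        exact (measurable_const.indicator hB).comp
          (measurable_snd.prodMk (hf.comp (measurable_snd.prodMk measurable_fst)))
      rw [e1, lintegral_lintegral_swap hu.aemeasurable]
      simp only [hHdef]
      exact lintegral_congr fun β => rfl
    have h2 : ∀ α, ∫⁻ β, H (Prod.swap (α, β)) ∂q α = κ' α (Prod.mk α ⁻¹' B) := by
      intro α
      rw [hκ'ap, Measure.bind_apply (measurable_prodMk_left hB) (hmapmeas α).aemeasurable]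
      refine lintegral_congr fun β => ?_
      simp only [hHdef, Prod.swap_prod_mk]
      rw [Measure.map_apply (hfα α) (measurable_prodMk_left hB),
        ← lintegral_indicator_one ((hfα α) (measurable_prodMk_left hB))]
      refine (lintegral_congr fun x => ?_).symm
      by_cases hx : (α, f α x) ∈ B <;> simp [hx, Set.indicator_apply]
    calc ∫⁻ z, phat z B ∂ν
        = ∫⁻ α, ∫⁻ x, phat (α, x) B ∂κ α ∂m := by
          rw [hν, Measure.lintegral_compProd (phat.measurable_coe hB)]
      _ = ∫⁻ α, ∫⁻ β, H (α, β) ∂p α ∂m := lintegral_congr h1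
      _ = ∫⁻ c, H c ∂(m ⊗ₘ p) := (Measure.lintegral_compProd hH).symm
      _ = ∫⁻ c, H (Prod.swap c) ∂(m ⊗ₘ q) := by
          rw [hswap, lintegral_map hH measurable_swap]
      _ = ∫⁻ α, ∫⁻ β, H (Prod.swap (α, β)) ∂q α ∂m :=
          Measure.lintegral_compProd (hH.comp measurable_swap)
      _ = ∫⁻ α, κ' α (Prod.mk α ⁻¹' B) ∂m := lintegral_congr h2
      _ = (m ⊗ₘ κ') B := (Measure.compProd_apply hB).symm
  have hfst : ν.fst = m := by rw [← hmarg]; rfl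
  constructor
  · intro hstatν
    have hν' : ν = m ⊗ₘ κ' := Measure.ext fun B hB => by rw [hstatν B hB, key B hB]
    have h1 := eq_condKernel_of_measure_eq_compProd κ (by rw [hfst]; exact hν)
    have h2 := eq_condKernel_of_measure_eq_compProd κ' (by rw [hfst]; exact hν')
    rw [hfst] at h1 h2
    filter_upwards [h1, h2] with α e1 e2
    rw [← hκap, ← hκ'ap, e1, e2]
  · intro h B hB
    have hae : κ =ᵐ[m] κ' := by
      filter_upwards [h] with α hα
      rw [hκap, hκ'ap, hα]
    rw [key B hB, ← Measure.compProd_congr hae, ← hν]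
end

section
/- Let Σ = E^ℕ with the Markov measure ℙ associated to a transition probability p and its stationary measure m, and let q be the transition probability in duality with p relative to m. Then for all measurable maps u: Σ → [0,∞) and g: E → [0,∞), one has ∫ u(σ(ω)) g(ω₀) dℙ(ω) = ∫ u(ω) (∫ g(β) q(ω₀, dβ)) dℙ(ω), where σ is the shift map on Σ. -/
open MeasureTheory ProbabilityTheory ENNReal

/-- Probability, starting from a point, that the next `n` steps of the chain driven by the
kernel `p` successively fall in the sets `A 0, A 1, …`. -/
noncomputable def chainProb {E : Type*} [MeasurableSpace E] (p : ProbabilityTheory.Kernel E E) :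
    ℕ → (ℕ → Set E) → E → ℝ≥0∞
  | 0, _, _ => 1
  | (n + 1), A, α => ∫⁻ β in A 0, chainProb p n (fun i => A (i + 1)) β ∂(p α)

/-- `P` is the Markov measure on `Σ = E^ℕ` associated with the transition probability `p`
and initial distribution `m`: the finite-dimensional distributions are the ones of the
homogeneous Markov chain with transition `p` started from `m`. -/
def IsMarkovMeasure {E : Type*} [MeasurableSpace E] (p : ProbabilityTheory.Kernel E E)
    (m : Measure E) (P : Measure (ℕ → E)) : Prop :=
  ∀ (n : ℕ) (A : ℕ → Set E), (∀ i, MeasurableSet (A i)) →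
    P {ω | ∀ i ≤ n, ω i ∈ A i} = ∫⁻ α in A 0, chainProb p n (fun i => A (i + 1)) α ∂m

section Aux

variable {E : Type*} [MeasurableSpace E]

lemma chainProb_measurable (p : Kernel E E) [IsMarkovKernel p] :
    ∀ (n : ℕ) (A : ℕ → Set E), (∀ i, MeasurableSet (A i)) → Measurable (chainProb p n A)
  | 0, A, _ => measurable_const
  | (n + 1), A, hA => by
    have := chainProb_measurable p n (fun i => A (i + 1)) (fun i => hA (i + 1))
    exact Measurable.setLIntegral_kernel this (hA 0)

/-- The π-system of box cylinders. -/
def boxCyl (E : Type*) [MeasurableSpace E] : Set (Set (ℕ → E)) :=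
  {S | ∃ (n : ℕ) (A : ℕ → Set E), (∀ i, MeasurableSet (A i)) ∧ S = {ω | ∀ i ≤ n, ω i ∈ A i}}

lemma isPiSystem_boxCyl : IsPiSystem (boxCyl E) := by
  rintro S ⟨n, A, hA, rfl⟩ T ⟨n', A', hA', rfl⟩ -
  refine ⟨max n n', fun i => (if i ≤ n then A i else Set.univ) ∩ (if i ≤ n' then A' i else Set.univ),
    fun i => MeasurableSet.inter (by split <;> [exact hA i; exact MeasurableSet.univ])
      (by split <;> [exact hA' i; exact MeasurableSet.univ]), ?_⟩
  ext ω
  simp only [Set.mem_inter_iff, Set.mem_setOf_eq, Set.mem_ite_univ_right]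
  constructor
  · rintro ⟨h1, h2⟩ i _
    exact ⟨fun hi => h1 i hi, fun hi => h2 i hi⟩
  · intro h
    exact ⟨fun i hi => (h i (le_trans hi (le_max_left _ _))).1 hi,
      fun i hi => (h i (le_trans hi (le_max_right _ _))).2 hi⟩

lemma generateFrom_boxCyl :
    (MeasurableSpace.pi : MeasurableSpace (ℕ → E)) = MeasurableSpace.generateFrom (boxCyl E) := by
  apply le_antisymm
  · refine iSup_le fun k => ?_
    rw [MeasurableSpace.comap_le_iff_le_map]
    intro A hA
    refine MeasurableSpace.measurableSet_generateFrom ?_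
    refine ⟨k, fun i => if i = k then A else Set.univ, fun i => ?_, ?_⟩
    · by_cases h : i = k
      · subst h; simpa using hA
      · simp [h]
    ext ω
    simp only [Set.mem_preimage, Set.mem_setOf_eq]
    constructor
    · intro h i _
      by_cases hik : i = k
      · subst hik; simpa using h
      · simp [hik]
    · intro h; simpa using h k le_rfl
  · refine MeasurableSpace.generateFrom_le ?_
    rintro S ⟨n, A, hA, rfl⟩
    have : {ω : ℕ → E | ∀ i ≤ n, ω i ∈ A i} = ⋂ i ∈ Set.Iic n, (fun ω => ω i) ⁻¹' A i := by
      ext ω; simp [Set.mem_iInter]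
    rw [this]
    exact MeasurableSet.biInter (Set.to_countable _)
      (fun i _ => (measurable_pi_apply i) (hA i))

end Aux

section Aux2

variable {E : Type*} [MeasurableSpace E]

lemma dual_lintegral (p q : Kernel E E) [IsMarkovKernel p] [IsMarkovKernel q] (m : Measure E)
    (hdual : ∀ A B : Set E, MeasurableSet A → MeasurableSet B →
      ∫⁻ α in B, p α A ∂m = ∫⁻ β in A, q β B ∂m)
    {h : E → ℝ≥0∞} (hh : Measurable h) {B : Set E} (hB : MeasurableSet B) :
    ∫⁻ α in B, ∫⁻ β, h β ∂(p α) ∂m = ∫⁻ β, q β B * h β ∂m := by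
  have hmeas : Measurable fun α => (p α : Measure E) := p.measurable
  have hμeq : (m.restrict B).bind (fun α => p α) = m.withDensity (fun β => q β B) := by
    ext A hA
    rw [Measure.bind_apply hA hmeas.aemeasurable, withDensity_apply _ hA]
    exact hdual A B hA hB
  calc ∫⁻ α in B, ∫⁻ β, h β ∂(p α) ∂m
      = ∫⁻ β, h β ∂((m.restrict B).bind fun α => p α) :=
        (Measure.lintegral_bind hmeas.aemeasurable hh.aemeasurable).symm
    _ = ∫⁻ β, h β ∂(m.withDensity fun β => q β B) := by rw [hμeq]
    _ = ∫⁻ β, q β B * h β ∂m := by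
        rw [lintegral_withDensity_eq_lintegral_mul m (q.measurable_coe hB) hh]; rfl

lemma measurableSet_cyl (n : ℕ) (A : ℕ → Set E) (hA : ∀ i, MeasurableSet (A i)) :
    MeasurableSet {ω : ℕ → E | ∀ i ≤ n, ω i ∈ A i} := by
  have : {ω : ℕ → E | ∀ i ≤ n, ω i ∈ A i} = ⋂ i ∈ Set.Iic n, (fun ω => ω i) ⁻¹' A i := by
    ext ω; simp [Set.mem_iInter]
  rw [this]
  exact MeasurableSet.biInter (Set.to_countable _) (fun i _ => (measurable_pi_apply i) (hA i))

lemma cyl_lintegral (p : Kernel E E) [IsMarkovKernel p] (m : Measure E)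
    (P : Measure (ℕ → E)) (hP : IsMarkovMeasure p m P)
    (n : ℕ) (A : ℕ → Set E) (hA : ∀ i, MeasurableSet (A i))
    {f : E → ℝ≥0∞} (hf : Measurable f) :
    ∫⁻ ω in {ω | ∀ i ≤ n, ω i ∈ A i}, f (ω 0) ∂P
      = ∫⁻ α in A 0, f α * chainProb p n (fun i => A (i + 1)) α ∂m := by
  set h : E → ℝ≥0∞ := chainProb p n (fun i => A (i + 1)) with hh
  have hhm : Measurable h := chainProb_measurable p n _ (fun i => hA (i + 1))
  set cyl : Set (ℕ → E) := {ω | ∀ i ≤ n, ω i ∈ A i} with hcyl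
  have hcylm : MeasurableSet cyl := measurableSet_cyl n A hA
  have hν : (P.restrict cyl).map (fun ω => ω 0) = (m.restrict (A 0)).withDensity h := by
    ext C hC
    rw [Measure.map_apply (measurable_pi_apply 0) hC, Measure.restrict_apply
      ((measurable_pi_apply 0) hC), withDensity_apply _ hC, Measure.restrict_restrict hC]
    have hset : ((fun ω : ℕ → E => ω 0) ⁻¹' C) ∩ cyl
        = {ω | ∀ i ≤ n, ω i ∈ (fun i => if i = 0 then C ∩ A 0 else A i) i} := by
      ext ω
      simp only [Set.mem_inter_iff, Set.mem_preimage, hcyl, Set.mem_setOf_eq]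
      constructor
      · rintro ⟨h1, h2⟩ i hi
        by_cases hi0 : i = 0
        · subst hi0; simpa using ⟨h1, h2 0 (Nat.zero_le n)⟩
        · simp [hi0, h2 i hi]
      · intro hω
        have h0 := hω 0 (Nat.zero_le n); simp at h0
        exact ⟨h0.1, fun i hi => by
          by_cases hi0 : i = 0
          · subst hi0; exact h0.2
          · have := hω i hi; simpa [hi0] using this⟩
    rw [hset, hP n _ (fun i => by by_cases hi0 : i = 0 <;> simp [hi0, hC.inter (hA 0), hA i])]
    simp [hh]
  calc ∫⁻ ω in cyl, f (ω 0) ∂P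
      = ∫⁻ α, f α ∂((P.restrict cyl).map (fun ω => ω 0)) :=
        (lintegral_map hf (measurable_pi_apply 0)).symm
    _ = ∫⁻ α, f α ∂((m.restrict (A 0)).withDensity h) := by rw [hν]
    _ = ∫⁻ α in A 0, h α * f α ∂m := by
        rw [lintegral_withDensity_eq_lintegral_mul _ hhm hf]; rfl
    _ = ∫⁻ α in A 0, f α * h α ∂m := by
        exact lintegral_congr fun α => mul_comm _ _

end Aux2

section Aux3

variable {E : Type*} [MeasurableSpace E]

lemma measurable_shift : Measurable (fun ω : ℕ → E => fun n => ω (n + 1)) :=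
  measurable_pi_lambda _ (fun n => measurable_pi_apply (n + 1))

lemma shift_measure_eq (p q : Kernel E E) [IsMarkovKernel p] [IsMarkovKernel q]
    (m : Measure E) [IsProbabilityMeasure m]
    (hdual : ∀ A B : Set E, MeasurableSet A → MeasurableSet B →
      ∫⁻ α in B, p α A ∂m = ∫⁻ β in A, q β B ∂m)
    (P : Measure (ℕ → E)) [IsProbabilityMeasure P] (hP : IsMarkovMeasure p m P)
    {B : Set E} (hB : MeasurableSet B) :
    (P.restrict ((fun ω => ω 0) ⁻¹' B)).map (fun ω n => ω (n + 1))
      = P.withDensity (fun ω => q (ω 0) B) := by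
  have hBpre : MeasurableSet ((fun ω : ℕ → E => ω 0) ⁻¹' B) := (measurable_pi_apply 0) hB
  have hfin : IsFiniteMeasure ((P.restrict ((fun ω : ℕ → E => ω 0) ⁻¹' B)).map
      (fun ω n => ω (n + 1))) := by
    constructor
    rw [Measure.map_apply measurable_shift MeasurableSet.univ]
    exact lt_of_le_of_lt (le_trans (measure_mono (Set.subset_univ _))
      ((Measure.restrict_apply_le _ _).trans (le_of_eq (measure_univ)))) one_lt_top
  have key : ∀ S ∈ boxCyl E,
      (P.restrict ((fun ω : ℕ → E => ω 0) ⁻¹' B)).map (fun ω n => ω (n + 1)) S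
        = P.withDensity (fun ω => q (ω 0) B) S := by
    rintro S ⟨n, A, hA, rfl⟩
    set h : E → ℝ≥0∞ := chainProb p n (fun i => A (i + 1)) with hh
    have hhm : Measurable h := chainProb_measurable p n _ (fun i => hA (i + 1))
    have hcylm := measurableSet_cyl n A hA
    set A' : ℕ → Set E := fun i => match i with | 0 => B | (j+1) => A j with hA'
    rw [Measure.map_apply measurable_shift hcylm,
      Measure.restrict_apply (measurable_shift hcylm)]
    -- left side: identify the set
    have hset : ((fun ω : ℕ → E => fun n => ω (n + 1)) ⁻¹' {ω | ∀ i ≤ n, ω i ∈ A i})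
        ∩ ((fun ω : ℕ → E => ω 0) ⁻¹' B)
        = {ω | ∀ i ≤ n + 1, ω i ∈ A' i} := by
      ext ω
      simp only [Set.mem_inter_iff, Set.mem_preimage, Set.mem_setOf_eq, hA']
      constructor
      · rintro ⟨h1, h2⟩ i hi
        cases i with
        | zero => exact h2
        | succ j => exact h1 j (Nat.succ_le_succ_iff.mp hi)
      · intro hω
        exact ⟨fun i hi => hω (i + 1) (Nat.succ_le_succ hi), hω 0 (Nat.zero_le _)⟩
    rw [hset, hP (n + 1) A' (fun i => by cases i <;> simp [hA', hB, hA])]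
    have hshift : (fun i => A' (i + 1)) = A := by funext i; simp [hA']
    have h0 : A' 0 = B := rfl
    rw [hshift, h0]
    have hchain : ∀ α, chainProb p (n + 1) A α = ∫⁻ β, (A 0).indicator h β ∂(p α) := by
      intro α
      rw [lintegral_indicator (hA 0)]
      rfl
    calc ∫⁻ α in B, chainProb p (n + 1) A α ∂m
        = ∫⁻ α in B, ∫⁻ β, (A 0).indicator h β ∂(p α) ∂m := by
          exact setLIntegral_congr_fun hB (fun α _ => hchain α)
      _ = ∫⁻ β, q β B * (A 0).indicator h β ∂m :=
          dual_lintegral p q m hdual (hhm.indicator (hA 0)) hB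
      _ = ∫⁻ β, (A 0).indicator (fun β => q β B * h β) β ∂m := by
          refine lintegral_congr fun β => ?_
          by_cases hβ : β ∈ A 0 <;> simp [hβ]
      _ = ∫⁻ β in A 0, q β B * h β ∂m := lintegral_indicator (hA 0) _
      _ = ∫⁻ ω in {ω | ∀ i ≤ n, ω i ∈ A i}, q (ω 0) B ∂P :=
          (cyl_lintegral p m P hP n A hA (q.measurable_coe hB)).symm
      _ = P.withDensity (fun ω => q (ω 0) B) {ω | ∀ i ≤ n, ω i ∈ A i} :=
          (withDensity_apply _ hcylm).symm
  refine ext_of_generate_finite (boxCyl E) generateFrom_boxCyl isPiSystem_boxCyl key ?_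
  have huniv : Set.univ ∈ boxCyl E :=
    ⟨0, fun _ => Set.univ, fun _ => MeasurableSet.univ, by ext ω; simp⟩
  simpa using key _ huniv

end Aux3

/-- For the Markov measure `ℙ` and the dual kernel `q`:
`∫ u(σω) g(ω₀) dℙ = ∫ u(ω) (∫ g(β) q(ω₀,dβ)) dℙ`. -/
theorem markov_measure_shift_duality {E : Type*} [MeasurableSpace E] [StandardBorelSpace E]
    (p q : ProbabilityTheory.Kernel E E) [IsMarkovKernel p] [IsMarkovKernel q]
    (m : Measure E) [IsProbabilityMeasure m]
    (hstat : ∀ A : Set E, MeasurableSet A → m A = ∫⁻ α, p α A ∂m)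
    (hdual : ∀ A B : Set E, MeasurableSet A → MeasurableSet B →
      ∫⁻ α in B, p α A ∂m = ∫⁻ β in A, q β B ∂m)
    (P : Measure (ℕ → E)) [IsProbabilityMeasure P] (hP : IsMarkovMeasure p m P)
    (u : (ℕ → E) → ℝ≥0∞) (hu : Measurable u) (g : E → ℝ≥0∞) (hg : Measurable g) :
    ∫⁻ ω, u (fun n => ω (n + 1)) * g (ω 0) ∂P =
      ∫⁻ ω, u ω * ∫⁻ β, g β ∂(q (ω 0)) ∂P := by
  refine Measurable.ennreal_induction
    (motive := fun g => ∫⁻ ω, u (fun n => ω (n + 1)) * g (ω 0) ∂P =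
      ∫⁻ ω, u ω * ∫⁻ β, g β ∂(q (ω 0)) ∂P) ?_ ?_ ?_ hg
  · intro c s hs
    have hpre : MeasurableSet ((fun ω : ℕ → E => ω 0) ⁻¹' s) := (measurable_pi_apply 0) hs
    have hd : Measurable fun ω : ℕ → E => q (ω 0) s :=
      (q.measurable_coe hs).comp (measurable_pi_apply 0)
    calc ∫⁻ ω, u (fun n => ω (n + 1)) * s.indicator (fun _ => c) (ω 0) ∂P
        = ∫⁻ ω, ((fun ω : ℕ → E => ω 0) ⁻¹' s).indicator
            (fun ω => c * u (fun n => ω (n + 1))) ω ∂P := by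
          refine lintegral_congr fun ω => ?_
          by_cases hω : ω 0 ∈ s <;> simp [hω, mul_comm]
      _ = ∫⁻ ω in (fun ω : ℕ → E => ω 0) ⁻¹' s, c * u (fun n => ω (n + 1)) ∂P :=
          lintegral_indicator hpre _
      _ = c * ∫⁻ ω in (fun ω : ℕ → E => ω 0) ⁻¹' s, u (fun n => ω (n + 1)) ∂P :=
          lintegral_const_mul c (hu.comp measurable_shift)
      _ = c * ∫⁻ ω, u ω ∂((P.restrict ((fun ω : ℕ → E => ω 0) ⁻¹' s)).map
            (fun ω n => ω (n + 1))) := by rw [lintegral_map hu measurable_shift]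
      _ = c * ∫⁻ ω, u ω ∂(P.withDensity fun ω => q (ω 0) s) := by
          rw [shift_measure_eq p q m hdual P hP hs]
      _ = c * ∫⁻ ω, q (ω 0) s * u ω ∂P := by
          rw [lintegral_withDensity_eq_lintegral_mul P hd hu]; rfl
      _ = ∫⁻ ω, u ω * ∫⁻ β, s.indicator (fun _ => c) β ∂(q (ω 0)) ∂P := by
          rw [← lintegral_const_mul c (f := fun ω => q (ω 0) s * u ω) (hd.mul hu)]
          refine lintegral_congr fun ω => ?_
          rw [lintegral_indicator_const hs]
          ring
  · intro f g hdisj hf hg Pf Pg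
    have hm1 : Measurable fun ω : ℕ → E => u (fun n => ω (n + 1)) * f (ω 0) :=
      (hu.comp measurable_shift).mul (hf.comp (measurable_pi_apply 0))
    have hm2 : Measurable fun ω : ℕ → E => u ω * ∫⁻ β, f β ∂(q (ω 0)) :=
      hu.mul ((Measurable.lintegral_kernel hf).comp (measurable_pi_apply 0))
    calc ∫⁻ ω, u (fun n => ω (n + 1)) * (f + g) (ω 0) ∂P
        = ∫⁻ ω, u (fun n => ω (n + 1)) * f (ω 0)
            + u (fun n => ω (n + 1)) * g (ω 0) ∂P := by
          refine lintegral_congr fun ω => ?_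
          simp [mul_add]
      _ = (∫⁻ ω, u (fun n => ω (n + 1)) * f (ω 0) ∂P)
            + ∫⁻ ω, u (fun n => ω (n + 1)) * g (ω 0) ∂P := lintegral_add_left hm1 _
      _ = (∫⁻ ω, u ω * ∫⁻ β, f β ∂(q (ω 0)) ∂P)
            + ∫⁻ ω, u ω * ∫⁻ β, g β ∂(q (ω 0)) ∂P := by rw [Pf, Pg]
      _ = ∫⁻ ω, u ω * ∫⁻ β, f β ∂(q (ω 0)) + u ω * ∫⁻ β, g β ∂(q (ω 0)) ∂P :=
          (lintegral_add_left hm2 _).symm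
      _ = ∫⁻ ω, u ω * ∫⁻ β, (f + g) β ∂(q (ω 0)) ∂P := by
          refine lintegral_congr fun ω => ?_
          rw [Pi.add_def, lintegral_add_left hf, mul_add]
  · intro f hf hmono Pf
    have hmL : ∀ k, Measurable fun ω : ℕ → E => u (fun n => ω (n + 1)) * f k (ω 0) :=
      fun k => (hu.comp measurable_shift).mul ((hf k).comp (measurable_pi_apply 0))
    have hmR : ∀ k, Measurable fun ω : ℕ → E => u ω * ∫⁻ β, f k β ∂(q (ω 0)) :=
      fun k => hu.mul ((Measurable.lintegral_kernel (hf k)).comp (measurable_pi_apply 0))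
    calc ∫⁻ ω, u (fun n => ω (n + 1)) * (⨆ k, f k (ω 0)) ∂P
        = ∫⁻ ω, ⨆ k, u (fun n => ω (n + 1)) * f k (ω 0) ∂P := by
          refine lintegral_congr fun ω => ?_
          exact ENNReal.mul_iSup _ _
      _ = ⨆ k, ∫⁻ ω, u (fun n => ω (n + 1)) * f k (ω 0) ∂P := by
          refine lintegral_iSup hmL fun a b hab ω => ?_
          exact mul_le_mul_right (hmono hab _) _
      _ = ⨆ k, ∫⁻ ω, u ω * ∫⁻ β, f k β ∂(q (ω 0)) ∂P := by
          exact iSup_congr Pf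
      _ = ∫⁻ ω, ⨆ k, u ω * ∫⁻ β, f k β ∂(q (ω 0)) ∂P := by
          refine (lintegral_iSup hmR fun a b hab ω => ?_).symm
          exact mul_le_mul_right (lintegral_mono fun β => hmono hab β) _
      _ = ∫⁻ ω, u ω * ∫⁻ β, ⨆ k, f k β ∂(q (ω 0)) ∂P := by
          refine lintegral_congr fun ω => ?_
          rw [← ENNReal.mul_iSup _ _, lintegral_iSup hf hmono]
end

section
/- Let μ̂ be a probability measure on Σ × M with first marginal ℙ whose disintegration with respect to ℙ has the form μ̂_ω = μ_{ω₀} for a family {μ_α : α ∈ E} of probability measures on M. Then μ̂ is invariant under the skew product F(ω,x) = (σ(ω), f_{ω₀}(x)) if and only if μ_α = ∫ (f_β)_*μ_β q(α,dβ) for m-almost every α. -/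
open MeasureTheory ProbabilityTheory ENNReal

/-- The skew product `F(ω,x) = (σω, f_{ω₀}(x))`. -/
def skewF {E M : Type*} (f : E → M → M) (z : (ℕ → E) × M) : (ℕ → E) × M :=
  (fun n => z.1 (n + 1), f (z.1 0) z.2)

namespace SkewAux

open MeasurableSpace Set

variable {E : Type*} [MeasurableSpace E]

/-- Box cylinders. -/
def boxCyl (E : Type*) [MeasurableSpace E] : Set (Set (ℕ → E)) :=
  {S | ∃ (n : ℕ) (A : ℕ → Set E), (∀ i, MeasurableSet (A i)) ∧ S = {ω | ∀ i ≤ n, ω i ∈ A i}}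

lemma univ_mem_boxCyl : (Set.univ : Set (ℕ → E)) ∈ boxCyl E :=
  ⟨0, fun _ => Set.univ, fun _ => MeasurableSet.univ, by simp⟩

lemma isCountablySpanning_boxCyl : IsCountablySpanning (boxCyl E) :=
  ⟨fun _ => Set.univ, fun _ => univ_mem_boxCyl, Set.iUnion_const _⟩

lemma isPiSystem_boxCyl : IsPiSystem (boxCyl E) := by
  rintro S ⟨n, A, hA, rfl⟩ T ⟨n', A', hA', rfl⟩ -
  classical
  refine ⟨max n n',
    fun i => (if i ≤ n then A i else Set.univ) ∩ (if i ≤ n' then A' i else Set.univ),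
    fun i => ?_, ?_⟩
  · apply MeasurableSet.inter <;> (split <;> first | exact hA _ | exact hA' _ | exact .univ)
  · ext ω
    simp only [Set.mem_inter_iff, Set.mem_setOf_eq]
    constructor
    · rintro ⟨h1, h2⟩ i hi
      constructor <;> split <;> simp_all
    · intro h
      constructor
      · intro i hi
        have := (h i (le_trans hi (le_max_left _ _))).1
        rwa [if_pos hi] at this
      · intro i hi
        have := (h i (le_trans hi (le_max_right _ _))).2
        rwa [if_pos hi] at this

lemma measurableSet_boxCyl {S : Set (ℕ → E)} (hS : S ∈ boxCyl E) : MeasurableSet S := by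
  obtain ⟨n, A, hA, rfl⟩ := hS
  have : {ω : ℕ → E | ∀ i ≤ n, ω i ∈ A i} = ⋂ i ∈ Set.Iic n, (fun ω : ℕ → E => ω i) ⁻¹' A i := by
    ext ω; simp
  rw [this]
  exact MeasurableSet.biInter (Set.to_countable _) fun i _ => measurable_pi_apply i (hA i)

lemma generateFrom_boxCyl :
    generateFrom (boxCyl E) = (MeasurableSpace.pi : MeasurableSpace (ℕ → E)) := by
  apply le_antisymm
  · exact generateFrom_le fun S hS => measurableSet_boxCyl hS
  · refine iSup_le fun i => ?_
    intro s hs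
    rcases hs with ⟨t, ht, rfl⟩
    apply measurableSet_generateFrom
    classical
    refine ⟨i, fun j => if j = i then t else Set.univ, fun j => ?_, ?_⟩
    · by_cases hji : j = i <;> simp [hji, ht]
    · ext ω
      simp only [Set.mem_preimage, Set.mem_setOf_eq]
      constructor
      · intro h j hj
        by_cases hji : j = i
        · subst hji; simpa using h
        · simp [hji]
      · intro h; have := h i le_rfl; simpa using this

variable (p q : Kernel E E) [IsMarkovKernel p] [IsMarkovKernel q]
  (m : Measure E) [IsProbabilityMeasure m] (P : Measure (ℕ → E)) [IsProbabilityMeasure P]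

lemma measurable_chainProb (n : ℕ) (A : ℕ → Set E) (hA : ∀ i, MeasurableSet (A i)) :
    Measurable (chainProb p n A) := by
  induction n generalizing A with
  | zero => exact measurable_const
  | succ n ih =>
    have hg := ih (fun i => A (i + 1)) (fun i => hA _)
    show Measurable fun α => ∫⁻ β in A 0, chainProb p n (fun i => A (i + 1)) β ∂(p α)
    exact Measurable.setLIntegral_kernel_prod_right
      (f := fun _ β => chainProb p n (fun i => A (i + 1)) β)
      (hg.comp measurable_snd) (hA 0)

variable {P m p}

lemma map_eval_zero (hP : IsMarkovMeasure p m P) : P.map (fun ω => ω 0) = m := by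
  ext S hS
  rw [Measure.map_apply (measurable_pi_apply 0) hS]
  have h := hP 0 (fun _ => S) (fun _ => hS)
  have hset : {ω : ℕ → E | ∀ i ≤ 0, ω i ∈ S} = (fun ω : ℕ → E => ω 0) ⁻¹' S := by
    ext ω; simp [Nat.le_zero]
  rw [hset] at h
  simpa [chainProb] using h

/-- Law of `ω₀` under `P` restricted to a box cylinder. -/
lemma setLIntegral_cyl (hP : IsMarkovMeasure p m P) (n : ℕ) (A : ℕ → Set E)
    (hA : ∀ i, MeasurableSet (A i)) {g : E → ℝ≥0∞} (hg : Measurable g) :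
    ∫⁻ ω in {ω | ∀ i ≤ n, ω i ∈ A i}, g (ω 0) ∂P
      = ∫⁻ α in A 0, g α * chainProb p n (fun i => A (i + 1)) α ∂m := by
  set G := chainProb p n (fun i => A (i + 1)) with hG
  have hGmeas : Measurable G := measurable_chainProb p n _ (fun i => hA _)
  set cyl := {ω : ℕ → E | ∀ i ≤ n, ω i ∈ A i} with hcyl
  have hcylm : MeasurableSet cyl := measurableSet_boxCyl ⟨n, A, hA, rfl⟩
  have key : (P.restrict cyl).map (fun ω => ω 0) = m.withDensity ((A 0).indicator G) := by
    ext S hS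
    rw [Measure.map_apply (measurable_pi_apply 0) hS, Measure.restrict_apply
      ((measurable_pi_apply 0) hS), withDensity_apply _ hS]
    have hset : (fun ω : ℕ → E => ω 0) ⁻¹' S ∩ cyl
        = {ω | ∀ i ≤ n, ω i ∈ (fun j => if j = 0 then A j ∩ S else A j) i} := by
      ext ω
      simp only [Set.mem_inter_iff, Set.mem_preimage, hcyl, Set.mem_setOf_eq]
      constructor
      · rintro ⟨h0, h⟩ i hi
        by_cases hi0 : i = 0
        · subst hi0; simp only [if_pos rfl]; exact ⟨h 0 hi, h0⟩
        · simpa [hi0] using h i hi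
      · intro h
        refine ⟨?_, fun i hi => ?_⟩
        · have := h 0 (Nat.zero_le n); simpa using this.2
        · have := h i hi
          by_cases hi0 : i = 0
          · subst hi0; simpa using this.1
          · simpa [hi0] using this
    rw [hset, hP n _ (fun i => by by_cases h : i = 0 <;> simp [h, (hA 0).inter hS, hA i])]
    have h1 : (if (0 : ℕ) = 0 then A 0 ∩ S else A 0) = A 0 ∩ S := by simp
    have h2 : (fun i => if i + 1 = 0 then A (i + 1) ∩ S else A (i + 1)) = fun i => A (i + 1) := by
      funext i; simp
    rw [h1, h2, ← hG]
    rw [← lintegral_indicator ((hA 0).inter hS), ← lintegral_indicator hS]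
    congr 1
    funext α
    by_cases hαA : α ∈ A 0 <;> by_cases hαS : α ∈ S <;>
      simp [Set.indicator_apply, hαA, hαS]
  calc ∫⁻ ω in cyl, g (ω 0) ∂P
      = ∫⁻ α, g α ∂((P.restrict cyl).map (fun ω => ω 0)) :=
        (lintegral_map hg (measurable_pi_apply 0)).symm
    _ = ∫⁻ α, g α ∂(m.withDensity ((A 0).indicator G)) := by rw [key]
    _ = ∫⁻ α, ((A 0).indicator G * g) α ∂m := by
        rw [lintegral_withDensity_eq_lintegral_mul m (hGmeas.indicator (hA 0)) hg]
    _ = ∫⁻ α in A 0, g α * G α ∂m := by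
        rw [← lintegral_indicator (hA 0)]
        congr 1
        funext α
        by_cases hα : α ∈ A 0 <;> simp [Set.indicator_apply, hα, mul_comm]

/-- The functional form of the duality between `p` and `q`. -/
lemma dual_fun (hdual : ∀ A B : Set E, MeasurableSet A → MeasurableSet B →
      ∫⁻ α in B, p α A ∂m = ∫⁻ β in A, q β B ∂m)
    {C : Set E} (hC : MeasurableSet C) {h : E → ℝ≥0∞} (hh : Measurable h) :
    ∫⁻ α in C, (∫⁻ β, h β ∂p α) ∂m = ∫⁻ β, h β * q β C ∂m := by
  revert h
  refine Measurable.ennreal_induction ?_ ?_ ?_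
  · intro c s hs
    have h1 : ∀ α : E, ∫⁻ β, Set.indicator s (fun _ => c) β ∂p α = c * p α s := fun α =>
      lintegral_indicator_const hs c
    simp_rw [h1]
    rw [lintegral_const_mul c (Kernel.measurable_coe p hs), hdual s C hs hC]
    have h2 : (fun β => Set.indicator s (fun _ => c) β * q β C)
        = fun β => Set.indicator s (fun β => c * q β C) β := by
      funext β; by_cases hβ : β ∈ s <;> simp [Set.indicator_apply, hβ]
    rw [h2, lintegral_indicator hs, lintegral_const_mul c (Kernel.measurable_coe q hC)]
  · intro f g _ hf hg Pf Pg
    have h1 : ∀ α : E, ∫⁻ β, (f + g) β ∂p α = (∫⁻ β, f β ∂p α) + ∫⁻ β, g β ∂p α := fun α =>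
      lintegral_add_left hf _
    simp_rw [h1]
    rw [lintegral_add_left
      (Measurable.lintegral_kernel_prod_right (f := fun _ β => f β) (hf.comp measurable_snd))]
    simp only [Pi.add_apply, add_mul]
    rw [lintegral_add_left (f := fun β => f β * q β C) (hf.mul (Kernel.measurable_coe q hC)), Pf, Pg]
  · intro f hf hmono Pf
    have h1 : ∀ α : E, ∫⁻ β, (⨆ n, f n β) ∂p α = ⨆ n, ∫⁻ β, f n β ∂p α := fun α =>
      lintegral_iSup hf (fun i j hij β => hmono hij β)
    simp_rw [h1]
    rw [lintegral_iSup (fun n => Measurable.lintegral_kernel_prod_right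
      (f := fun _ β => f n β) ((hf n).comp measurable_snd))
      (fun i j hij α => lintegral_mono fun β => hmono hij β)]
    simp_rw [ENNReal.iSup_mul]
    rw [lintegral_iSup (f := fun n β => f n β * q β C) (fun n => (hf n).mul (Kernel.measurable_coe q hC))
      (fun i j hij β => mul_le_mul_left (hmono hij β) _)]
    exact iSup_congr Pf

/-- **Step B**: the joint law of `(σω, ω₀)` under `P` is `P ⊗ₘ (q ∘ eval₀)`. -/
lemma map_shiftPair (hP : IsMarkovMeasure p m P)
    (hdual : ∀ A B : Set E, MeasurableSet A → MeasurableSet B →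
      ∫⁻ α in B, p α A ∂m = ∫⁻ β in A, q β B ∂m) :
    P.map (fun ω => ((fun n => ω (n + 1), ω 0) : (ℕ → E) × E))
      = P.compProd (q.comap (fun ω : ℕ → E => ω 0) (measurable_pi_apply 0)) := by
  have hmeas : Measurable fun ω : ℕ → E => ((fun n => ω (n + 1), ω 0) : (ℕ → E) × E) :=
    (measurable_pi_lambda _ fun n => measurable_pi_apply (n + 1)).prodMk (measurable_pi_apply 0)
  haveI : IsProbabilityMeasure (P.map (fun ω : ℕ → E => ((fun n => ω (n + 1), ω 0) : (ℕ → E) × E)))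
    := Measure.isProbabilityMeasure_map hmeas.aemeasurable
  refine ext_of_generate_finite _
    (generateFrom_eq_prod generateFrom_boxCyl generateFrom_measurableSet
      isCountablySpanning_boxCyl isCountablySpanning_measurableSet).symm
    (isPiSystem_boxCyl.prod isPiSystem_measurableSet) ?_ ?_
  · rintro _ ⟨S, hS, C, hC, rfl⟩
    obtain ⟨n, A, hA, rfl⟩ := hS
    replace hC : MeasurableSet C := hC
    have hSm : MeasurableSet {ω : ℕ → E | ∀ i ≤ n, ω i ∈ A i} :=
      measurableSet_boxCyl ⟨n, A, hA, rfl⟩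
    set G := chainProb p n (fun i => A (i + 1)) with hG
    have hGmeas : Measurable G := measurable_chainProb p n _ (fun i => hA _)
    rw [Measure.map_apply hmeas (hSm.prod hC)]
    have hpre : (fun ω : ℕ → E => ((fun n => ω (n + 1), ω 0) : (ℕ → E) × E)) ⁻¹'
        ({ω | ∀ i ≤ n, ω i ∈ A i} ×ˢ C)
        = {ω | ∀ i ≤ n + 1, ω i ∈ (fun j => Nat.casesOn (motive := fun _ => Set E) j C fun k => A k) i} := by
      ext ω
      simp only [Set.mem_preimage, Set.mem_prod, Set.mem_setOf_eq]
      constructor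
      · rintro ⟨h1, h2⟩ i hi
        cases i with
        | zero => exact h2
        | succ k => exact h1 k (Nat.succ_le_succ_iff.mp hi)
      · intro h
        exact ⟨fun k hk => h (k + 1) (Nat.succ_le_succ hk), h 0 (Nat.zero_le _)⟩
    have hA' : ∀ i, MeasurableSet ((fun j => Nat.casesOn (motive := fun _ => Set E) j C fun k => A k) i) := by
      intro i
      cases i with
      | zero => exact hC
      | succ k => exact hA k
    rw [hpre, hP (n + 1) _ hA']
    have hred : (fun i => (fun j => Nat.casesOn (motive := fun _ => Set E) j C fun k => A k) (i + 1)) = A := rfl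
    rw [hred]
    have hchain : ∀ α, chainProb p (n + 1) A α = ∫⁻ β, ((A 0).indicator G) β ∂p α := by
      intro α
      rw [lintegral_indicator (hA 0)]
      rfl
    calc ∫⁻ α in C, chainProb p (n + 1) A α ∂m
        = ∫⁻ α in C, (∫⁻ β, ((A 0).indicator G) β ∂p α) ∂m := by
          exact setLIntegral_congr_fun hC (fun α _ => hchain α)
      _ = ∫⁻ β, ((A 0).indicator G) β * q β C ∂m :=
          dual_fun q hdual hC (hGmeas.indicator (hA 0))
      _ = ∫⁻ α in A 0, q α C * G α ∂m := by
          rw [← lintegral_indicator (hA 0)]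
          congr 1
          funext β
          by_cases hβ : β ∈ A 0 <;> simp [Set.indicator_apply, hβ, mul_comm]
      _ = ∫⁻ ω in {ω | ∀ i ≤ n, ω i ∈ A i}, q (ω 0) C ∂P :=
          (setLIntegral_cyl hP n A hA (Kernel.measurable_coe q hC)).symm
      _ = (P.compProd (q.comap (fun ω : ℕ → E => ω 0) (measurable_pi_apply 0)))
            ({ω | ∀ i ≤ n, ω i ∈ A i} ×ˢ C) := by
          rw [Measure.compProd_apply_prod hSm hC]
          simp [Kernel.comap_apply]
  · rw [Measure.map_apply hmeas MeasurableSet.univ]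
    simp [measure_univ]

end SkewAux

/-- A probability measure `μ̂` on `Σ × M` with first marginal `ℙ` whose
disintegration has the form `μ̂_ω = μ_{ω₀}` is invariant under the skew product `F` iff
`μ_α = ∫ (f_β)_* μ_β q(α,dβ)` for `m`-almost every `α`. -/
theorem invariant_iff_disintegration {E M : Type*}
    [MeasurableSpace E] [StandardBorelSpace E] [MeasurableSpace M] [StandardBorelSpace M]
    (p q : ProbabilityTheory.Kernel E E) [IsMarkovKernel p] [IsMarkovKernel q]
    (m : Measure E) [IsProbabilityMeasure m]
    (hstat : ∀ A : Set E, MeasurableSet A → m A = ∫⁻ α, p α A ∂m)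
    (huniq : ∀ m' : Measure E, IsProbabilityMeasure m' →
      (∀ A : Set E, MeasurableSet A → m' A = ∫⁻ α, p α A ∂m') → m' = m)
    (hdual : ∀ A B : Set E, MeasurableSet A → MeasurableSet B →
      ∫⁻ α in B, p α A ∂m = ∫⁻ β in A, q β B ∂m)
    (f : E → M → M) (hf : Measurable fun z : E × M => f z.1 z.2)
    (P : Measure (ℕ → E)) [IsProbabilityMeasure P] (hP : IsMarkovMeasure p m P)
    (μhat : Measure ((ℕ → E) × M)) [IsProbabilityMeasure μhat]
    (μa : E → Measure M) (hμprob : ∀ α, IsProbabilityMeasure (μa α))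
    (hμmeas : ∀ B : Set M, MeasurableSet B → Measurable fun α => μa α B)
    (hmarg : μhat.map Prod.fst = P)
    (hdis : ∀ (A : Set (ℕ → E)) (B : Set M), MeasurableSet A → MeasurableSet B →
      μhat (A ×ˢ B) = ∫⁻ ω in A, μa (ω 0) B ∂P) :
    μhat.map (skewF f) = μhat ↔
      (∀ᵐ α ∂m, μa α = (q α : Measure E).bind (fun β => (μa β).map (f β))) := by
  classical
  open SkewAux in
  haveI : Nonempty E := by
    by_contra h
    rw [not_nonempty_iff] at h
    have h1 : (Set.univ : Set E) = ∅ := Set.univ_eq_empty_iff.mpr h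
    have h2 := measure_univ (μ := m)
    rw [h1, measure_empty] at h2
    exact zero_ne_one h2
  haveI : Nonempty M := by
    by_contra h
    rw [not_nonempty_iff] at h
    have h1 : (Set.univ : Set M) = ∅ := Set.univ_eq_empty_iff.mpr h
    have h2 := (hμprob (Classical.arbitrary E)).measure_univ
    rw [h1, measure_empty] at h2
    exact zero_ne_one h2
  -- the kernel `α ↦ μa α`
  set κμ : Kernel E M := ⟨μa, Measure.measurable_of_measurable_coe _ hμmeas⟩ with hκμ
  haveI : IsMarkovKernel κμ := ⟨fun α => hμprob α⟩
  have hfα : ∀ α, Measurable (f α) := fun α => hf.comp measurable_prodMk_left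
  have hmm1 : ∀ B : Set M, MeasurableSet B → Measurable fun α => μa α (f α ⁻¹' B) := by
    intro B hB
    have ht : MeasurableSet {w : E × M | f w.1 w.2 ∈ B} := hf hB
    exact Kernel.measurable_kernel_prodMk_left (κ := κμ) ht
  have hmapmeas : Measurable fun β => (μa β).map (f β) := by
    apply Measure.measurable_of_measurable_coe
    intro B hB
    have h1 : (fun β => (μa β).map (f β) B) = fun β => μa β (f β ⁻¹' B) := by
      funext β; rw [Measure.map_apply (hfα β) hB]
    rw [h1]; exact hmm1 B hB
  set ν : E → Measure M := fun γ => (q γ : Measure E).bind fun β => (μa β).map (f β) with hν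
  have hνapp : ∀ (γ) (B : Set M), MeasurableSet B → ν γ B = ∫⁻ β, μa β (f β ⁻¹' B) ∂q γ := by
    intro γ B hB
    rw [hν]
    rw [Measure.bind_apply hB hmapmeas.aemeasurable]
    congr 1; funext β; rw [Measure.map_apply (hfα β) hB]
  have hνprob : ∀ γ, IsProbabilityMeasure (ν γ) := by
    intro γ
    constructor
    rw [hνapp γ Set.univ MeasurableSet.univ]
    have h1 : ∀ β, μa β (f β ⁻¹' Set.univ) = 1 := fun β => by
      rw [Set.preimage_univ]; exact (hμprob β).measure_univ
    simp [h1]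
  have hνmeas : ∀ B : Set M, MeasurableSet B → Measurable fun γ => ν γ B := by
    intro B hB
    have h1 : (fun γ => ν γ B) = fun γ => ∫⁻ β, μa β (f β ⁻¹' B) ∂q γ :=
      funext fun γ => hνapp γ B hB
    rw [h1]
    exact Measurable.lintegral_kernel_prod_right (f := fun _ β => μa β (f β ⁻¹' B))
      ((hmm1 B hB).comp measurable_snd)
  set κν : Kernel E M := ⟨ν, Measure.measurable_of_measurable_coe _ hνmeas⟩ with hκν
  haveI : IsMarkovKernel κν := ⟨hνprob⟩
  -- kernels on the path space
  have hev0m : Measurable fun ω : ℕ → E => ω 0 := measurable_pi_apply 0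
  set κP : Kernel (ℕ → E) M := κμ.comap (fun ω : ℕ → E => ω 0) hev0m with hκP
  set κPν : Kernel (ℕ → E) M := κν.comap (fun ω : ℕ → E => ω 0) hev0m with hκPν
  -- μhat is the compProd of P with κP
  have hμhat : μhat = P.compProd κP := by
    refine ext_of_generate_finite _ generateFrom_prod.symm isPiSystem_prod ?_ (by simp)
    rintro _ ⟨A, hA, B, hB, rfl⟩
    replace hA : MeasurableSet A := hA
    replace hB : MeasurableSet B := hB
    rw [hdis A B hA hB, Measure.compProd_apply_prod hA hB]
    simp [hκP, Kernel.comap_apply, hκμ]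
  -- the pushforward of μhat under the skew product
  have hskewmeas : Measurable (skewF f) := by
    have h2 : Measurable fun z : (ℕ → E) × M => f (z.1 0) z.2 := by
      have h1 : Measurable fun z : (ℕ → E) × M => ((z.1 0, z.2) : E × M) :=
        ((measurable_pi_apply 0).comp measurable_fst).prodMk measurable_snd
      exact hf.comp h1
    show Measurable fun z : (ℕ → E) × M => ((fun n => z.1 (n + 1), f (z.1 0) z.2) : (ℕ → E) × M)
    exact (measurable_pi_lambda _ fun n => (measurable_pi_apply (n + 1)).comp measurable_fst).prodMk h2
  haveI : IsProbabilityMeasure (μhat.map (skewF f)) :=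
    Measure.isProbabilityMeasure_map hskewmeas.aemeasurable
  have hshiftmeas : Measurable fun ω : ℕ → E => ((fun n => ω (n + 1), ω 0) : (ℕ → E) × E) :=
    (measurable_pi_lambda _ fun n => measurable_pi_apply (n + 1)).prodMk (measurable_pi_apply 0)
  have hmapF : μhat.map (skewF f) = P.compProd κPν := by
    refine ext_of_generate_finite _ generateFrom_prod.symm isPiSystem_prod ?_ (by simp)
    rintro _ ⟨A, hA, B, hB, rfl⟩
    replace hA : MeasurableSet A := hA
    replace hB : MeasurableSet B := hB
    rw [Measure.map_apply hskewmeas (hA.prod hB), hμhat,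
      Measure.compProd_apply (hskewmeas (hA.prod hB))]
    set g : (ℕ → E) × E → ℝ≥0∞ := fun w => Set.indicator A (fun _ => μa w.2 (f w.2 ⁻¹' B)) w.1
      with hgdef
    have hgmeas : Measurable g := by
      have h1 : g = fun w : (ℕ → E) × E => Set.indicator (A ×ˢ (Set.univ : Set E))
          (fun w : (ℕ → E) × E => μa w.2 (f w.2 ⁻¹' B)) w := by
        funext w
        by_cases hw : w.1 ∈ A <;> simp [Set.indicator_apply, hw, hgdef]
      rw [h1]
      exact Measurable.indicator ((hmm1 B hB).comp measurable_snd) (hA.prod MeasurableSet.univ)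
    have hint : ∀ ω : ℕ → E, κP ω (Prod.mk ω ⁻¹' (skewF f ⁻¹' (A ×ˢ B)))
        = g ((fun n => ω (n + 1), ω 0)) := by
      intro ω
      by_cases hω : (fun n => ω (n + 1)) ∈ A
      · have h1 : Prod.mk ω ⁻¹' (skewF f ⁻¹' (A ×ˢ B)) = f (ω 0) ⁻¹' B := by
          ext x; simp [skewF, hω]
        rw [h1]
        simp [hgdef, Set.indicator_apply, hω, hκP, Kernel.comap_apply, hκμ]
      · have h1 : Prod.mk ω ⁻¹' (skewF f ⁻¹' (A ×ˢ B)) = ∅ := by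
          ext x; simp [skewF, hω]
        rw [h1]
        simp [hgdef, Set.indicator_apply, hω]
    simp_rw [hint]
    rw [← lintegral_map hgmeas hshiftmeas, map_shiftPair q hP hdual,
      Measure.lintegral_compProd hgmeas]
    have h2 : ∀ ω' : ℕ → E,
        ∫⁻ β, g (ω', β) ∂((q.comap (fun ω : ℕ → E => ω 0) (measurable_pi_apply 0)) ω')
          = Set.indicator A (fun _ => ν (ω' 0) B) ω' := by
      intro ω'
      by_cases hω' : ω' ∈ A
      · simp only [hgdef, Set.indicator_apply, hω', if_true]
        rw [Kernel.comap_apply, hνapp (ω' 0) B hB]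
      · simp [hgdef, Set.indicator_apply, hω']
    simp_rw [h2]
    have h3 : ∀ a : ℕ → E, Set.indicator A (fun _ => ν (a 0) B) a
        = Set.indicator A (fun w : ℕ → E => ν (w 0) B) a := by
      intro a; by_cases ha : a ∈ A <;> simp [Set.indicator_apply, ha]
    simp_rw [h3]
    rw [lintegral_indicator hA, Measure.compProd_apply_prod hA hB]
    rfl
  have hm0 : P.map (fun ω : ℕ → E => ω 0) = m := map_eval_zero hP
  constructor
  · intro hinv
    have hPP : P.compProd κPν = P.compProd κP := by rw [← hmapF, hinv, hμhat]
    have hmm : m.compProd κν = m.compProd κμ := by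
      refine ext_of_generate_finite _ generateFrom_prod.symm isPiSystem_prod ?_ (by simp)
      rintro _ ⟨C, hC, B, hB, rfl⟩
      replace hC : MeasurableSet C := hC
      replace hB : MeasurableSet B := hB
      rw [Measure.compProd_apply_prod hC hB, Measure.compProd_apply_prod hC hB]
      have e1 : ∫⁻ α in C, κν α B ∂m
          = (P.compProd κPν) (((fun ω : ℕ → E => ω 0) ⁻¹' C) ×ˢ B) := by
        rw [Measure.compProd_apply_prod (hev0m hC) hB, ← hm0,
          setLIntegral_map hC (Kernel.measurable_coe κν hB) hev0m]
        simp [hκPν, Kernel.comap_apply, hκν]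
      have e2 : ∫⁻ α in C, κμ α B ∂m
          = (P.compProd κP) (((fun ω : ℕ → E => ω 0) ⁻¹' C) ×ˢ B) := by
        rw [Measure.compProd_apply_prod (hev0m hC) hB, ← hm0,
          setLIntegral_map hC (Kernel.measurable_coe κμ hB) hev0m]
        simp [hκP, Kernel.comap_apply, hκμ]
      rw [e1, e2, hPP]
    set ρ : Measure (E × M) := m.compProd κμ with hρ
    have hfst : ρ.fst = m := Measure.fst_compProd m κμ
    have h1 : ∀ᵐ α ∂m, κν α = ρ.condKernel α := by
      have h := eq_condKernel_of_measure_eq_compProd (ρ := ρ) κν (by rw [hfst]; exact hmm.symm)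
      rwa [hfst] at h
    have h2 : ∀ᵐ α ∂m, κμ α = ρ.condKernel α := by
      have h := eq_condKernel_of_measure_eq_compProd (ρ := ρ) κμ (by rw [hfst])
      rwa [hfst] at h
    filter_upwards [h1, h2] with α hα1 hα2
    show μa α = ν α
    calc μa α = κμ α := rfl
      _ = ρ.condKernel α := hα2
      _ = κν α := hα1.symm
      _ = ν α := rfl
  · intro hae
    have hae' : ∀ᵐ ω ∂P, μa (ω 0) = ν (ω 0) :=
      ae_of_ae_map (p := fun α => μa α = ν α) hev0m.aemeasurable (by rw [hm0]; exact hae)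
    have hker : κPν =ᵐ[P] κP := by
      filter_upwards [hae'] with ω hω
      show κν (ω 0) = κμ (ω 0)
      exact hω.symm
    rw [hmapF, hμhat]
    exact Measure.compProd_congr hker
end

section
/- If ν ∈ S(φ) is a stationary measure with disintegration {ν_α}, and μ̂ = Ξ(ν) ∈ I₀(φ) is defined via μ_α = ∫ ν_β q(α,dβ), then (f_β)_*μ_β = ν_β for m-almost every β. -/
open MeasureTheory ProbabilityTheory ENNReal

/-- `ν` is a stationary measure of the Markovian random iteration. -/
def IsStationaryRI {E M : Type*} [MeasurableSpace E] [MeasurableSpace M]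
    (p : ProbabilityTheory.Kernel E E) (f : E → M → M) (ν : Measure (E × M)) : Prop :=
  ∀ B : Set (E × M), MeasurableSet B →
    ν B = ∫⁻ z, ∫⁻ β, B.indicator (fun _ => (1 : ℝ≥0∞)) (β, f β z.2) ∂(p z.1) ∂ν

/-- If `ν ∈ S(φ)` has disintegration `{ν_α}` and `μ_α = ∫ ν_β q(α,dβ)`,
then `(f_β)_* μ_β = ν_β` for `m`-almost every `β`. -/
theorem pushforward_of_dual_bind_eq {E M : Type*}
    [MeasurableSpace E] [StandardBorelSpace E] [MeasurableSpace M] [StandardBorelSpace M]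
    (p q : ProbabilityTheory.Kernel E E) [IsMarkovKernel p] [IsMarkovKernel q]
    (m : Measure E) [IsProbabilityMeasure m]
    (hstat : ∀ A : Set E, MeasurableSet A → m A = ∫⁻ α, p α A ∂m)
    (huniq : ∀ m' : Measure E, IsProbabilityMeasure m' →
      (∀ A : Set E, MeasurableSet A → m' A = ∫⁻ α, p α A ∂m') → m' = m)
    (hdual : ∀ A B : Set E, MeasurableSet A → MeasurableSet B →
      ∫⁻ α in B, p α A ∂m = ∫⁻ β in A, q β B ∂m)
    (f : E → M → M) (hf : Measurable fun z : E × M => f z.1 z.2)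
    (ν : Measure (E × M)) [IsProbabilityMeasure ν]
    (να : E → Measure M) (hdis : IsDisint m ν να)
    (hstatν : IsStationaryRI p f ν) :
    ∀ᵐ β ∂m, ((q β : Measure E).bind να).map (f β) = να β := by
  obtain ⟨hprob, hmeas, hT⟩ := hdis
  have hκmeas : Measurable να :=
    Measure.measurable_of_measurable_coe _ (fun B hB => hmeas B hB)
  set κ : Kernel E M := ⟨να, hκmeas⟩ with hκdef
  have hκapp : ∀ α, κ α = να α := fun _ => rfl
  haveI : IsMarkovKernel κ := ⟨fun α => hprob α⟩
  have hfβ : ∀ β, Measurable (f β) := fun β => hf.comp measurable_prodMk_left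
  haveI : Nonempty E := by
    by_contra h
    rw [not_nonempty_iff] at h
    have h1 := measure_univ (μ := m)
    rw [Measure.eq_zero_of_isEmpty m] at h1
    simp at h1
  haveI : Nonempty M := by
    by_contra h
    rw [not_nonempty_iff] at h
    have h1 := (hprob (Classical.arbitrary E)).measure_univ
    rw [Measure.eq_zero_of_isEmpty (να _)] at h1
    simp at h1
  -- ν = m ⊗ₘ κ
  have hν : ν = m ⊗ₘ κ := by
    refine ext_of_generate_finite _ generateFrom_prod.symm isPiSystem_prod ?_ ?_
    · rintro _ ⟨A, hA, B, hB, rfl⟩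
      rw [Measure.compProd_apply_prod hA hB, hT A B hA hB]
      rfl
    · simp
  -- duality at the level of measures on E × E
  have hPQ : (m ⊗ₘ (p : Kernel E E)) = (m ⊗ₘ (q : Kernel E E)).map Prod.swap := by
    refine ext_of_generate_finite _ generateFrom_prod.symm isPiSystem_prod ?_ ?_
    · rintro _ ⟨A, hA, B, hB, rfl⟩
      rw [Measure.compProd_apply_prod hA hB,
        Measure.map_apply measurable_swap (hA.prod hB), Set.preimage_swap_prod,
        Measure.compProd_apply_prod hB hA]
      exact hdual B A hB hA
    · rw [Measure.map_apply measurable_swap MeasurableSet.univ]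
      simp
  -- duality at the level of functions
  have hdualfun : ∀ G : E × E → ℝ≥0∞, Measurable G →
      ∫⁻ α, ∫⁻ β, G (α, β) ∂(p α) ∂m = ∫⁻ β, ∫⁻ α, G (α, β) ∂(q β) ∂m := by
    intro G hG
    rw [← Measure.lintegral_compProd hG, hPQ,
      lintegral_map hG measurable_swap,
      Measure.lintegral_compProd (f := fun z : E × E => G (Prod.swap z))
        (hG.comp measurable_swap)]
    simp only [Prod.swap_prod_mk]
  -- joint measurability of (α, β) ↦ να α (f β ⁻¹' B)
  have hjm : ∀ B : Set M, MeasurableSet B →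
      Measurable fun z : E × E => να z.1 ((f z.2) ⁻¹' B) := by
    intro B hB
    have h1 : ∀ z : E × E, να z.1 ((f z.2) ⁻¹' B)
        = ∫⁻ x, B.indicator (fun _ => (1 : ℝ≥0∞)) (f z.2 x) ∂((κ.comap Prod.fst (measurable_fst : Measurable (Prod.fst : E × E → E))) z) := by
      intro z
      rw [Kernel.comap_apply, hκapp, ← lintegral_indicator_one ((hfβ z.2) hB)]
      exact lintegral_congr fun x => rfl
    simp_rw [h1]
    refine Measurable.lintegral_kernel_prod_right (κ := κ.comap Prod.fst (measurable_fst : Measurable (Prod.fst : E × E → E))) ?_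
    have : Measurable fun zx : (E × E) × M => f zx.1.2 zx.2 :=
      hf.comp ((measurable_snd.comp measurable_fst).prodMk measurable_snd)
    exact (measurable_one.indicator hB).comp this
  -- the candidate kernel η
  have hηcoe : ∀ B : Set M, MeasurableSet B → ∀ β,
      (((q β : Measure E).bind να).map (f β)) B = ∫⁻ α, να α ((f β) ⁻¹' B) ∂(q β) := by
    intro B hB β
    rw [Measure.map_apply (hfβ β) hB, Measure.bind_apply ((hfβ β) hB) hκmeas.aemeasurable]
  have hηm : ∀ B : Set M, MeasurableSet B →
      Measurable fun β => (((q β : Measure E).bind να).map (f β)) B := by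
    intro B hB
    simp_rw [hηcoe B hB]
    refine Measurable.lintegral_kernel_prod_right (κ := q) ?_
    exact (hjm B hB).comp (measurable_snd.prodMk measurable_fst)
  have hηmeas : Measurable fun β => ((q β : Measure E).bind να).map (f β) :=
    Measure.measurable_of_measurable_coe _ (fun B hB => hηm B hB)
  set η : Kernel E M := ⟨fun β => ((q β : Measure E).bind να).map (f β), hηmeas⟩ with hηdef
  have hηapp : ∀ β, η β = ((q β : Measure E).bind να).map (f β) := fun _ => rfl
  haveI : IsMarkovKernel η := by
    constructor
    intro β
    constructor
    rw [hηapp, hηcoe Set.univ MeasurableSet.univ β]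
    simp
  -- ν = m ⊗ₘ η
  have hν2 : ν = m ⊗ₘ η := by
    refine ext_of_generate_finite _ generateFrom_prod.symm isPiSystem_prod ?_ ?_
    · rintro _ ⟨A, hA, B, hB, rfl⟩
      rw [Measure.compProd_apply_prod hA hB, hstatν (A ×ˢ B) (hA.prod hB)]
      have hind : Measurable ((A ×ˢ B).indicator (fun _ => (1 : ℝ≥0∞))) :=
        measurable_one.indicator (hA.prod hB)
      have hz : Measurable fun zβ : (E × M) × E => (zβ.2, f zβ.2 zβ.1.2) :=
        measurable_snd.prodMk (hf.comp (measurable_snd.prodMk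
          (measurable_snd.comp measurable_fst)))
      have hF : Measurable fun z : E × M =>
          ∫⁻ β, (A ×ˢ B).indicator (fun _ => (1 : ℝ≥0∞)) (β, f β z.2) ∂(p z.1) := by
        refine Measurable.lintegral_kernel_prod_right
          (κ := (p : Kernel E E).comap Prod.fst (measurable_fst : Measurable (Prod.fst : E × M → E))) ?_
        exact hind.comp hz
      rw [hν, Measure.lintegral_compProd hF]
      have key : ∀ α, (∫⁻ x, ∫⁻ β,
            (A ×ˢ B).indicator (fun _ => (1 : ℝ≥0∞)) (β, f β x) ∂(p α) ∂(κ α))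
          = ∫⁻ β, A.indicator (fun _ => (1 : ℝ≥0∞)) β * να α ((f β) ⁻¹' B) ∂(p α) := by
        intro α
        have hswap : (∫⁻ x, ∫⁻ β,
              (A ×ˢ B).indicator (fun _ => (1 : ℝ≥0∞)) (β, f β x) ∂(p α) ∂(κ α))
            = ∫⁻ β, ∫⁻ x,
              (A ×ˢ B).indicator (fun _ => (1 : ℝ≥0∞)) (β, f β x) ∂(κ α) ∂(p α) := by
          refine lintegral_lintegral_swap ?_
          refine Measurable.aemeasurable ?_
          exact (hind.comp (measurable_snd.prodMk
            (hf.comp (measurable_snd.prodMk measurable_fst)))) |>.comp measurable_id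
        rw [hswap]
        congr 1 with β
        have : ∀ x, (A ×ˢ B).indicator (fun _ => (1 : ℝ≥0∞)) (β, f β x)
            = A.indicator (fun _ => (1 : ℝ≥0∞)) β
              * ((f β) ⁻¹' B).indicator (fun _ => (1 : ℝ≥0∞)) x := by
          intro x
          by_cases hβ : β ∈ A <;> by_cases hx : f β x ∈ B <;>
            simp [Set.indicator_apply, hβ, hx]
        simp_rw [this]
        rw [lintegral_const_mul _ (measurable_const.indicator ((hfβ β) hB)),
          lintegral_indicator ((hfβ β) hB), setLIntegral_one, hκapp]
      simp_rw [key]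
      have hGm : Measurable fun z : E × E =>
          A.indicator (fun _ => (1 : ℝ≥0∞)) z.2 * να z.1 ((f z.2) ⁻¹' B) :=
        ((measurable_const.indicator hA).comp measurable_snd).mul (hjm B hB)
      have hAB := hdualfun (fun z : E × E =>
        A.indicator (fun _ => (1 : ℝ≥0∞)) z.2 * να z.1 ((f z.2) ⁻¹' B)) hGm
      simp only at hAB
      rw [hAB]
      have : ∀ β, (∫⁻ α, A.indicator (fun _ => (1 : ℝ≥0∞)) β * να α ((f β) ⁻¹' B) ∂(q β))
          = A.indicator (fun β => η β B) β := by
        intro β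
        rw [lintegral_const_mul _ (hmeas _ ((hfβ β) hB))]
        have hη : η β B = ∫⁻ α, να α ((f β) ⁻¹' B) ∂(q β) := by
          rw [hηapp, hηcoe B hB β]
        by_cases hβ : β ∈ A <;> simp [Set.indicator_apply, hβ, hη]
      simp_rw [this]
      rw [lintegral_indicator hA]
    · simp
  -- fst marginal of ν is m
  have hfst : ν.fst = m := by rw [hν, Measure.fst_compProd]
  have h1 : ∀ᵐ β ∂m, κ β = ν.condKernel β := by
    rw [← hfst]
    exact eq_condKernel_of_measure_eq_compProd κ (by rw [hfst]; exact hν)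
  have h2 : ∀ᵐ β ∂m, η β = ν.condKernel β := by
    rw [← hfst]
    exact eq_condKernel_of_measure_eq_compProd η (by rw [hfst]; exact hν2)
  filter_upwards [h1, h2] with β hβ1 hβ2
  rw [← hηapp, hβ2, ← hβ1, hκapp]
end

section
/- If the pair (p,m) is bounded with constant C (i.e. C ≤ dp_α/dm ≤ C⁻¹ for all α, with 0 < C ≤ 1), then the transition probability q in duality with p relative to m is given by q(β,A) = ∫_A k(α,β) dm(α), where k(α,β) = (dp_α/dm)(β); consequently C ≤ dq_α/dm ≤ C⁻¹ for m-almost every α. -/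
open MeasureTheory ProbabilityTheory ENNReal

/-- If the pair `(p,m)` is bounded with constant `C`
(`C ≤ dp_α/dm = k α ≤ C⁻¹`), then the dual transition probability `q` is given by
`q(β,A) = ∫_A k(α,β) dm(α)`, and consequently `C ≤ dq_α/dm ≤ C⁻¹` for `m`-a.e. `α`. -/
theorem dual_kernel_of_bounded_pair {E : Type*} [MeasurableSpace E] [StandardBorelSpace E]
    (p q : ProbabilityTheory.Kernel E E) [IsMarkovKernel p] [IsMarkovKernel q]
    (m : Measure E) [IsProbabilityMeasure m]
    (hstat : ∀ A : Set E, MeasurableSet A → m A = ∫⁻ α, p α A ∂m)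
    (hdual : ∀ A B : Set E, MeasurableSet A → MeasurableSet B →
      ∫⁻ α in B, p α A ∂m = ∫⁻ β in A, q β B ∂m)
    (C : ℝ≥0∞) (hC0 : 0 < C) (hC1 : C ≤ 1)
    (k : E → E → ℝ≥0∞) (hk : Measurable fun z : E × E => k z.1 z.2)
    (hdens : ∀ α, (p α : Measure E) = m.withDensity (k α))
    (hbound : ∀ α β, C ≤ k α β ∧ k α β ≤ C⁻¹) :
    (∀ A : Set E, MeasurableSet A → ∀ᵐ β ∂m, q β A = ∫⁻ α in A, k α β ∂m) ∧
    (∀ A : Set E, MeasurableSet A → ∀ᵐ α ∂m, C * m A ≤ q α A ∧ q α A ≤ C⁻¹ * m A) := by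
  have main : ∀ A : Set E, MeasurableSet A → ∀ᵐ β ∂m, q β A = ∫⁻ α in A, k α β ∂m := by
    intro A hA
    have hmeas1 : Measurable fun β => q β A := q.measurable_coe hA
    have hswap : Measurable fun z : E × E => k z.2 z.1 := hk.comp measurable_swap
    have hmeas2 : Measurable fun β => ∫⁻ α in A, k α β ∂m :=
      hswap.lintegral_prod_right' (ν := m.restrict A)
    refine ae_eq_of_forall_setLIntegral_eq_of_sigmaFinite hmeas1 hmeas2 fun s hs _ => ?_
    have h1 : ∫⁻ β in s, q β A ∂m = ∫⁻ α in A, p α s ∂m := (hdual s A hs hA).symm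
    have h2 : ∀ α, p α s = ∫⁻ β in s, k α β ∂m := fun α => by
      rw [hdens α, withDensity_apply _ hs]
    calc ∫⁻ β in s, q β A ∂m = ∫⁻ α in A, ∫⁻ β in s, k α β ∂m ∂m := by
          rw [h1]; exact lintegral_congr fun α => h2 α
      _ = ∫⁻ β in s, ∫⁻ α in A, k α β ∂m ∂m :=
          lintegral_lintegral_swap hk.aemeasurable
  refine ⟨main, fun A hA => ?_⟩
  filter_upwards [main A hA] with α hα
  rw [hα]
  constructor
  · calc C * m A = ∫⁻ β in A, C ∂m := (setLIntegral_const A C).symm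
      _ ≤ ∫⁻ β in A, k β α ∂m := lintegral_mono fun β => (hbound β α).1
  · calc ∫⁻ β in A, k β α ∂m ≤ ∫⁻ β in A, C⁻¹ ∂m := lintegral_mono fun β => (hbound β α).2
      _ = C⁻¹ * m A := setLIntegral_const A C⁻¹
end

section
/- Let φ be a bounded Markovian random iteration with constant C, let ν ∈ S(φ) be a stationary measure, and let μ̂ = Ξ(ν) be the corresponding F-invariant measure. Then C·μ̂ ≤ ℙ × (Π₂)_*ν ≤ C⁻¹·μ̂, where Π₂(α,x) = x is the projection onto M. In particular μ̂ and ℙ × (Π₂)_*ν are mutually absolutely continuous. -/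
open MeasureTheory ProbabilityTheory ENNReal

/-- Auxiliary kernel: `β ↦ m.withDensity (fun α => k α β)`. -/
noncomputable def dualDensityKernel {E : Type*} [MeasurableSpace E] (m : Measure E) [SFinite m]
    (k : E → E → ℝ≥0∞) (hk : Measurable fun z : E × E => k z.1 z.2) : Kernel E E where
  toFun := fun β => m.withDensity fun α => k α β
  measurable' := by
    refine Measure.measurable_of_measurable_coe _ fun A hA => ?_
    have h1 : ∀ β, (m.withDensity fun α => k α β) A
        = ∫⁻ α, ((Set.univ : Set E) ×ˢ A).indicator (fun z : E × E => k z.2 z.1) (β, α) ∂m := by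
      intro β
      rw [withDensity_apply _ hA, ← lintegral_indicator hA]
      congr 1 with α
      by_cases h : α ∈ A <;> simp [h, Set.indicator]
    simp_rw [h1]
    exact Measurable.lintegral_prod_right'
      (f := fun z : E × E => ((Set.univ : Set E) ×ˢ A).indicator (fun z : E × E => k z.2 z.1) z)
      ((hk.comp measurable_swap).indicator (MeasurableSet.univ.prod hA))

lemma dualDensityKernel_apply {E : Type*} [MeasurableSpace E] (m : Measure E) [SFinite m]
    (k : E → E → ℝ≥0∞) (hk : Measurable fun z : E × E => k z.1 z.2) (β : E) :
    dualDensityKernel m k hk β = m.withDensity fun α => k α β := rfl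

/-- Almost every fiber of the dual kernel `q` has density `k · β` with respect to `m`. -/
theorem q_ae_eq_density {E : Type*}
    [MeasurableSpace E] [StandardBorelSpace E]
    (p q : ProbabilityTheory.Kernel E E) [IsMarkovKernel p] [IsMarkovKernel q]
    (m : Measure E) [IsProbabilityMeasure m]
    (hdual : ∀ A B : Set E, MeasurableSet A → MeasurableSet B →
      ∫⁻ α in B, p α A ∂m = ∫⁻ β in A, q β B ∂m)
    (C : ℝ≥0∞) (hC0 : 0 < C) (hC1 : C ≤ 1)
    (k : E → E → ℝ≥0∞) (hk : Measurable fun z : E × E => k z.1 z.2)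
    (hdens : ∀ α, (p α : Measure E) = m.withDensity (k α))
    (hbound : ∀ α β, C ≤ k α β ∧ k α β ≤ C⁻¹) :
    ∀ᵐ β ∂m, q β = dualDensityKernel m k hk β := by
  haveI : Nonempty E := by
    rcases isEmpty_or_nonempty E with h | h
    · exfalso
      have h1 : m Set.univ = 1 := measure_univ
      rw [Set.univ_eq_empty_iff.2 h] at h1
      simp at h1
    · exact h
  set κ' := dualDensityKernel m k hk with hκ'
  haveI : IsFiniteKernel κ' := by
    refine ⟨⟨C⁻¹, ENNReal.inv_lt_top.2 hC0, fun β => ?_⟩⟩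
    rw [dualDensityKernel_apply, withDensity_apply _ MeasurableSet.univ]
    calc ∫⁻ α in Set.univ, k α β ∂m ≤ ∫⁻ _ in Set.univ, C⁻¹ ∂m :=
          setLIntegral_mono' MeasurableSet.univ fun α _ => (hbound α β).2
      _ = C⁻¹ := by simp
  set ρ : Measure (E × E) := m ⊗ₘ q with hρ
  have hfst : ρ.fst = m := Measure.fst_compProd m q
  have hrect : ∀ A B : Set E, MeasurableSet A → MeasurableSet B →
      ρ (A ×ˢ B) = (m ⊗ₘ κ') (A ×ˢ B) := by
    intro A B hA hB
    rw [hρ, Measure.compProd_apply_prod hA hB, Measure.compProd_apply_prod hA hB]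
    rw [← hdual A B hA hB]
    have h1 : ∀ α, p α A = ∫⁻ β in A, k α β ∂m := fun α => by
      rw [hdens α, withDensity_apply _ hA]
    have h2 : ∀ β, κ' β B = ∫⁻ α in B, k α β ∂m := fun β => by
      rw [dualDensityKernel_apply, withDensity_apply _ hB]
    simp_rw [h1, h2]
    exact lintegral_lintegral_swap hk.aemeasurable
  have hρκ' : ρ = m ⊗ₘ κ' := by
    refine ext_of_generate_finite _ generateFrom_prod.symm isPiSystem_prod ?_ ?_
    · rintro s ⟨A, hA, B, hB, rfl⟩
      exact hrect A B hA hB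
    · rw [← Set.univ_prod_univ]
      exact hrect _ _ MeasurableSet.univ MeasurableSet.univ
  have h1 := eq_condKernel_of_measure_eq_compProd (ρ := ρ) q (by rw [hfst])
  have h2 := eq_condKernel_of_measure_eq_compProd (ρ := ρ) κ' (by rw [hfst]; exact hρκ')
  rw [hfst] at h1 h2
  filter_upwards [h1, h2] with β hb1 hb2
  rw [hb1, hb2]

/-- Auxiliary kernel: `ω ↦ (q (ω 0)).bind να`. -/
noncomputable def bindKernel0 {E M : Type*} [MeasurableSpace E] [MeasurableSpace M]
    (q : ProbabilityTheory.Kernel E E) [IsMarkovKernel q]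
    (να : E → Measure M) (hνα : Measurable να) : Kernel (ℕ → E) M where
  toFun := fun ω => ((q (ω 0) : Measure E)).bind να
  measurable' := by
    refine Measure.measurable_of_measurable_coe _ fun B hB => ?_
    have h1 : ∀ ω : ℕ → E, ((q (ω 0) : Measure E)).bind να B = ∫⁻ β, να β B ∂(q (ω 0)) :=
      fun ω => Measure.bind_apply hB hνα.aemeasurable
    simp_rw [h1]
    exact (Measurable.lintegral_kernel_prod_right (κ := q)
      (f := fun _ β => να β B)
      (((Measure.measurable_coe hB).comp hνα).comp measurable_snd)).comp (measurable_pi_apply 0)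

lemma bindKernel0_apply {E M : Type*} [MeasurableSpace E] [MeasurableSpace M]
    (q : ProbabilityTheory.Kernel E E) [IsMarkovKernel q]
    (να : E → Measure M) (hνα : Measurable να) (ω : ℕ → E) :
    bindKernel0 q να hνα ω = ((q (ω 0) : Measure E)).bind να := rfl

/-- For a bounded Markovian random iteration with constant `C`, a
stationary measure `ν ∈ S(φ)` and its corresponding invariant measure `μ̂ = Ξ(ν)`
(first marginal `ℙ`, disintegration `μ̂_ω = μ_{ω₀}` with `μ_α = ∫ ν_β q(α,dβ)`), one has
`C·μ̂ ≤ ℙ × (Π₂)_*ν ≤ C⁻¹·μ̂`; in particular the two measures are mutually absolutely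
continuous. -/
theorem bounded_comparison {E M : Type*}
    [MeasurableSpace E] [StandardBorelSpace E] [MeasurableSpace M] [StandardBorelSpace M]
    (p q : ProbabilityTheory.Kernel E E) [IsMarkovKernel p] [IsMarkovKernel q]
    (m : Measure E) [IsProbabilityMeasure m]
    (hstat : ∀ A : Set E, MeasurableSet A → m A = ∫⁻ α, p α A ∂m)
    (huniq : ∀ m' : Measure E, IsProbabilityMeasure m' →
      (∀ A : Set E, MeasurableSet A → m' A = ∫⁻ α, p α A ∂m') → m' = m)
    (hdual : ∀ A B : Set E, MeasurableSet A → MeasurableSet B →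
      ∫⁻ α in B, p α A ∂m = ∫⁻ β in A, q β B ∂m)
    (C : ℝ≥0∞) (hC0 : 0 < C) (hC1 : C ≤ 1)
    (k : E → E → ℝ≥0∞) (hk : Measurable fun z : E × E => k z.1 z.2)
    (hdens : ∀ α, (p α : Measure E) = m.withDensity (k α))
    (hbound : ∀ α β, C ≤ k α β ∧ k α β ≤ C⁻¹)
    (f : E → M → M) (hf : Measurable fun z : E × M => f z.1 z.2)
    (P : Measure (ℕ → E)) [IsProbabilityMeasure P] (hP : IsMarkovMeasure p m P)
    (ν : Measure (E × M)) [IsProbabilityMeasure ν]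
    (να : E → Measure M) (hdis : IsDisint m ν να) (hstatν : IsStationaryRI p f ν)
    (μhat : Measure ((ℕ → E) × M)) [IsProbabilityMeasure μhat]
    (hmarg : μhat.map Prod.fst = P)
    (hμdis : ∀ (A : Set (ℕ → E)) (B : Set M), MeasurableSet A → MeasurableSet B →
      μhat (A ×ˢ B) = ∫⁻ ω in A, ((q (ω 0) : Measure E).bind να) B ∂P) :
    C • μhat ≤ P.prod (ν.map Prod.snd) ∧ P.prod (ν.map Prod.snd) ≤ C⁻¹ • μhat ∧
      μhat ≪ P.prod (ν.map Prod.snd) ∧ P.prod (ν.map Prod.snd) ≪ μhat := by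
  have hCne : C ≠ 0 := hC0.ne'
  have hCtop : C ≠ ∞ := (lt_of_le_of_lt hC1 one_lt_top).ne
  set νM : Measure M := ν.map Prod.snd with hνM
  haveI : IsProbabilityMeasure νM := Measure.isProbabilityMeasure_map measurable_snd.aemeasurable
  have hνα_meas : Measurable να :=
    Measure.measurable_of_measurable_coe _ fun B hB => hdis.2.1 B hB
  have hνMapp : ∀ B : Set M, MeasurableSet B → νM B = ∫⁻ β, να β B ∂m := by
    intro B hB
    rw [hνM, Measure.map_apply measurable_snd hB]
    have h2 : Prod.snd ⁻¹' B = (Set.univ : Set E) ×ˢ B := by ext z; simp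
    rw [h2, hdis.2.2 _ _ MeasurableSet.univ hB, Measure.restrict_univ]
  -- a.e. bounds for the fiber measures
  have hae := q_ae_eq_density p q m hdual C hC0 hC1 k hk hdens hbound
  have haeQ : ∀ᵐ α ∂m, ∀ B : Set M, MeasurableSet B →
      C * ((q α : Measure E).bind να) B ≤ νM B ∧
      νM B ≤ C⁻¹ * ((q α : Measure E).bind να) B := by
    filter_upwards [hae] with α hα
    intro B hB
    have hgmeas : Measurable fun β => k β α :=
      hk.comp (measurable_id.prodMk measurable_const)
    have hfmeas : Measurable fun β => να β B := hdis.2.1 B hB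
    have hb : ((q α : Measure E)).bind να B = ∫⁻ β, k β α * να β B ∂m := by
      rw [Measure.bind_apply hB hνα_meas.aemeasurable, hα, dualDensityKernel_apply,
        lintegral_withDensity_eq_lintegral_mul _ hgmeas hfmeas]
      rfl
    have hup : ((q α : Measure E)).bind να B ≤ C⁻¹ * νM B := by
      rw [hb, hνMapp B hB, ← lintegral_const_mul' _ _ (ENNReal.inv_ne_top.2 hCne)]
      exact lintegral_mono fun β => mul_le_mul_left (hbound β α).2 _
    have hlo : C * νM B ≤ ((q α : Measure E)).bind να B := by
      rw [hb, hνMapp B hB, ← lintegral_const_mul' _ _ hCtop]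
      exact lintegral_mono fun β => mul_le_mul_left (hbound β α).1 _
    constructor
    · calc C * ((q α : Measure E)).bind να B ≤ C * (C⁻¹ * νM B) := mul_le_mul_right hup _
        _ = (C * C⁻¹) * νM B := by ring
        _ = νM B := by rw [ENNReal.mul_inv_cancel hCne hCtop, one_mul]
    · calc νM B = C⁻¹ * (C * νM B) := by
            rw [← mul_assoc, ENNReal.inv_mul_cancel hCne hCtop, one_mul]
        _ ≤ C⁻¹ * ((q α : Measure E)).bind να B := mul_le_mul_right hlo _
  -- transfer the a.e. statement from `m` to `P` through `ω ↦ ω 0`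
  have hev0 : ∀ A : Set E, MeasurableSet A → P ((fun ω : ℕ → E => ω 0) ⁻¹' A) = m A := by
    intro A hA
    have h := hP 0 (fun _ => A) (fun _ => hA)
    have hset : {ω : ℕ → E | ∀ i ≤ 0, ω i ∈ A} = (fun ω : ℕ → E => ω 0) ⁻¹' A := by
      ext ω
      simp [Nat.le_zero]
    rw [hset] at h
    rw [h]
    simp [chainProb]
  obtain ⟨N, hNsub, hNmeas, hN0⟩ := exists_measurable_superset_of_null (ae_iff.1 haeQ)
  have haeQP : ∀ᵐ ω ∂P, ∀ B : Set M, MeasurableSet B →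
      C * ((q (ω 0) : Measure E).bind να) B ≤ νM B ∧
      νM B ≤ C⁻¹ * ((q (ω 0) : Measure E).bind να) B := by
    rw [ae_iff]
    refine measure_mono_null (t := (fun ω : ℕ → E => ω 0) ⁻¹' N)
      (fun ω hω => Set.mem_preimage.2 (hNsub hω)) ?_
    rw [hev0 N hNmeas]
    exact hN0
  -- identify μhat with a comp-prod measure
  set κ : Kernel (ℕ → E) M := bindKernel0 q να hνα_meas with hκdef
  haveI : IsMarkovKernel κ := by
    refine ⟨fun ω => ⟨?_⟩⟩
    rw [bindKernel0_apply, Measure.bind_apply MeasurableSet.univ hνα_meas.aemeasurable]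
    have h1 : ∀ β, να β Set.univ = 1 := fun β => (hdis.1 β).measure_univ
    simp_rw [h1]
    simp
  have hμeq : μhat = P ⊗ₘ κ := by
    refine ext_of_generate_finite _ generateFrom_prod.symm isPiSystem_prod ?_ ?_
    · rintro s ⟨A, hA, B, hB, rfl⟩
      have hA' : MeasurableSet A := hA
      have hB' : MeasurableSet B := hB
      rw [hμdis A B hA' hB', Measure.compProd_apply_prod hA' hB']
      rfl
    · rw [measure_univ, Measure.compProd_apply_univ, measure_univ]
  have hμS : ∀ S : Set ((ℕ → E) × M), MeasurableSet S →
      μhat S = ∫⁻ ω, ((q (ω 0) : Measure E).bind να) (Prod.mk ω ⁻¹' S) ∂P := by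
    intro S hS
    rw [hμeq, Measure.compProd_apply hS]
    rfl
  have hprodS : ∀ S : Set ((ℕ → E) × M), MeasurableSet S →
      (P.prod νM) S = ∫⁻ ω, νM (Prod.mk ω ⁻¹' S) ∂P := fun S hS => Measure.prod_apply hS
  have goal1 : C • μhat ≤ P.prod νM := by
    rw [Measure.le_iff]
    intro S hS
    rw [Measure.smul_apply, smul_eq_mul, hμS S hS, hprodS S hS,
      ← lintegral_const_mul' _ _ hCtop]
    refine lintegral_mono_ae ?_
    filter_upwards [haeQP] with ω hω
    exact (hω _ (measurable_prodMk_left hS)).1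
  have goal2 : P.prod νM ≤ C⁻¹ • μhat := by
    rw [Measure.le_iff]
    intro S hS
    rw [Measure.smul_apply, smul_eq_mul, hμS S hS, hprodS S hS,
      ← lintegral_const_mul' _ _ (ENNReal.inv_ne_top.2 hCne)]
    refine lintegral_mono_ae ?_
    filter_upwards [haeQP] with ω hω
    exact (hω _ (measurable_prodMk_left hS)).2
  refine ⟨goal1, goal2, ?_, ?_⟩
  · refine Measure.AbsolutelyContinuous.mk fun S hS h0 => ?_
    have h1 := Measure.le_iff.1 goal1 S hS
    rw [Measure.smul_apply, smul_eq_mul, h0] at h1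
    exact (mul_eq_zero.1 (le_antisymm h1 zero_le)).resolve_left hCne
  · refine Measure.AbsolutelyContinuous.mk fun S hS h0 => ?_
    have h2 := Measure.le_iff.1 goal2 S hS
    rw [Measure.smul_apply, smul_eq_mul, h0, mul_zero] at h2
    exact le_antisymm h2 zero_le
end

section
/- Let φ be a bounded Markovian random iteration with constant C, and let F be the induced skew product on Σ × M. Let h: Σ × M → [0,∞) be measurable with h(ω,x) ≥ h(F(ω,x)) for all (ω,x), and define h̄(x) = ∫ h(ω,x) dℙ(ω). Then for every n ≥ 1 and x₀ ∈ M, 𝔼(h(Fⁿ(·, x₀)) | 𝓕_{n-1})(ω) ≥ C·h̄(f_ω^n(x₀)) for ℙ-almost every ω, where 𝓕_{n-1} is the σ-algebra generated by the coordinate projections ω ↦ ω_i for i = 0,…,n−1. -/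
set_option linter.unusedSectionVars false

open MeasureTheory ProbabilityTheory ENNReal Set

/-- The random iteration `f_ω^n = f_{ω_{n-1}} ∘ ⋯ ∘ f_{ω₀}`. -/
def iterRI {E M : Type*} (f : E → M → M) (ω : ℕ → E) : ℕ → M → M
  | 0 => id
  | (n + 1) => fun x => f (ω n) (iterRI f ω n x)

/-- The σ-algebra `𝓕_{n-1}` generated by the coordinate projections `ω ↦ ω_i`,
`i = 0, …, n-1`. -/
def coordSigma (E : Type*) [MeasurableSpace E] (n : ℕ) : MeasurableSpace (ℕ → E) :=
  MeasurableSpace.comap (fun ω (i : Fin n) => ω (i : ℕ)) inferInstance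


namespace CondAux

variable {E : Type*} [MeasurableSpace E]

def cylSet (t : ℕ) (B : ℕ → Set E) : Set (ℕ → E) := {ω | ∀ i ≤ t, ω i ∈ B i}

lemma measurableSet_cylSet {t : ℕ} {B : ℕ → Set E} (hB : ∀ i, MeasurableSet (B i)) :
    MeasurableSet (cylSet t B) := by
  have : cylSet t B = ⋂ (i : ℕ) (_ : i ≤ t), (fun ω : ℕ → E => ω i) ⁻¹' (B i) := by
    ext ω; simp [cylSet]
  rw [this]
  exact MeasurableSet.iInter fun i => MeasurableSet.iInter fun _ =>
    (measurable_pi_apply i) (hB i)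

noncomputable def chainW (p : Kernel E E) : ℕ → (ℕ → Set E) → (E → ℝ≥0∞) → E → ℝ≥0∞
  | 0, _, g, α => g α
  | (t + 1), B, g, α => ∫⁻ β in B 0, chainW p t (fun i => B (i + 1)) g β ∂(p α)

variable (p : Kernel E E) [IsSFiniteKernel p]

lemma chainW_measurable : ∀ (t : ℕ) (B : ℕ → Set E), (∀ i, MeasurableSet (B i)) →
    ∀ g : E → ℝ≥0∞, Measurable g → Measurable (chainW p t B g)
  | 0, B, _, g, hg => hg
  | (t + 1), B, hB, g, hg => by
    have ih := chainW_measurable t (fun i => B (i + 1)) (fun i => hB (i + 1)) g hg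
    have : chainW p (t + 1) B g =
        fun α => ∫⁻ β, (B 0).indicator (chainW p t (fun i => B (i + 1)) g) β ∂(p α) := by
      funext α
      rw [lintegral_indicator (hB 0)]
      rfl
    rw [this]
    exact Measurable.lintegral_kernel_prod_right'
      ((ih.indicator (hB 0)).comp measurable_snd)

lemma chainProb_eq_chainW : ∀ (t : ℕ) (B : ℕ → Set E),
    chainProb p t B = chainW p t B (fun _ => 1)
  | 0, B => rfl
  | (t + 1), B => by
    funext α
    simp only [chainProb, chainW, chainProb_eq_chainW t]

lemma chainProb_measurable (t : ℕ) (B : ℕ → Set E) (hB : ∀ i, MeasurableSet (B i)) :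
    Measurable (chainProb p t B) := by
  rw [chainProb_eq_chainW]
  exact chainW_measurable p t B hB _ measurable_const

lemma chainW_mono : ∀ (t : ℕ) (B : ℕ → Set E) (g₁ g₂ : E → ℝ≥0∞), g₁ ≤ g₂ →
    ∀ α, chainW p t B g₁ α ≤ chainW p t B g₂ α
  | 0, _, _, _, hg, α => hg α
  | (t + 1), B, g₁, g₂, hg, α => by
    simp only [chainW]
    exact lintegral_mono fun β => chainW_mono t _ _ _ hg β

lemma chainW_add : ∀ (t : ℕ) (B : ℕ → Set E), (∀ i, MeasurableSet (B i)) →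
    ∀ (g₁ g₂ : E → ℝ≥0∞), Measurable g₁ →
    ∀ α, chainW p t B (fun β => g₁ β + g₂ β) α = chainW p t B g₁ α + chainW p t B g₂ α
  | 0, _, _, _, _, _, _ => rfl
  | (t + 1), B, hB, g₁, g₂, hg₁, α => by
    simp only [chainW]
    have : ∀ β, chainW p t (fun i => B (i + 1)) (fun β => g₁ β + g₂ β) β =
        chainW p t (fun i => B (i + 1)) g₁ β + chainW p t (fun i => B (i + 1)) g₂ β :=
      chainW_add t _ (fun i => hB (i + 1)) g₁ g₂ hg₁
    simp only [this]
    exact lintegral_add_left (chainW_measurable p t _ (fun i => hB (i + 1)) g₁ hg₁) _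

lemma chainW_const_mul : ∀ (t : ℕ) (B : ℕ → Set E), (∀ i, MeasurableSet (B i)) →
    ∀ (c : ℝ≥0∞) (g : E → ℝ≥0∞), Measurable g →
    ∀ α, chainW p t B (fun β => c * g β) α = c * chainW p t B g α
  | 0, _, _, _, _, _, _ => rfl
  | (t + 1), B, hB, c, g, hg, α => by
    simp only [chainW]
    have : ∀ β, chainW p t (fun i => B (i + 1)) (fun β => c * g β) β =
        c * chainW p t (fun i => B (i + 1)) g β :=
      chainW_const_mul t _ (fun i => hB (i + 1)) c g hg
    simp only [this]
    exact lintegral_const_mul c (chainW_measurable p t _ (fun i => hB (i + 1)) g hg)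

lemma chainW_iSup : ∀ (t : ℕ) (B : ℕ → Set E), (∀ i, MeasurableSet (B i)) →
    ∀ (g : ℕ → E → ℝ≥0∞), (∀ j, Measurable (g j)) → Monotone g →
    ∀ α, chainW p t B (fun β => ⨆ j, g j β) α = ⨆ j, chainW p t B (g j) α
  | 0, _, _, _, _, _, _ => rfl
  | (t + 1), B, hB, g, hgm, hmono, α => by
    simp only [chainW]
    have : ∀ β, chainW p t (fun i => B (i + 1)) (fun β => ⨆ j, g j β) β =
        ⨆ j, chainW p t (fun i => B (i + 1)) (g j) β :=
      chainW_iSup t _ (fun i => hB (i + 1)) g hgm hmono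
    simp only [this]
    exact lintegral_iSup
      (fun j => chainW_measurable p t _ (fun i => hB (i + 1)) (g j) (hgm j))
      (fun i j hij β => chainW_mono p t _ _ _ (hmono hij) β)

lemma chainW_zero (B : ℕ → Set E) (g : E → ℝ≥0∞) (α : E) : chainW p 0 B g α = g α := rfl

lemma chainW_succ (t : ℕ) (B : ℕ → Set E) (g : E → ℝ≥0∞) (α : E) :
    chainW p (t + 1) B g α = ∫⁻ β in B 0, chainW p t (fun i => B (i + 1)) g β ∂(p α) := rfl

lemma chainProb_zero (A : ℕ → Set E) (α : E) : chainProb p 0 A α = 1 := rfl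

lemma chainProb_succ (t : ℕ) (A : ℕ → Set E) (α : E) :
    chainProb p (t + 1) A α = ∫⁻ β in A 0, chainProb p t (fun i => A (i + 1)) β ∂(p α) := rfl

lemma chainW_indicator : ∀ (u : ℕ) (D : ℕ → Set E) (A : Set E), MeasurableSet A →
    ∀ α, chainW p (u + 1) D (A.indicator 1) α =
      chainProb p (u + 1) (fun i => if i = u then D i ∩ A else D i) α
  | 0, D, A, hA, α => by
    rw [chainW_succ, chainProb_succ]
    have h0 : (if (0 : ℕ) = 0 then D 0 ∩ A else D 0) = D 0 ∩ A := if_pos rfl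
    rw [h0]
    simp only [chainW_zero, chainProb_zero]
    rw [lintegral_indicator_one hA, Measure.restrict_apply hA, setLIntegral_one, inter_comm]
  | (u + 1), D, A, hA, α => by
    rw [chainW_succ, chainProb_succ]
    have h0 : (if (0 : ℕ) = u + 1 then D 0 ∩ A else D 0) = D 0 := if_neg (by omega)
    rw [h0]
    have hfun : (fun i => if i + 1 = u + 1 then D (i + 1) ∩ A else D (i + 1)) =
        (fun i => if i = u then D (i + 1) ∩ A else D (i + 1)) := by
      funext i; by_cases h : i = u
      · rw [if_pos (by omega), if_pos h]
      · rw [if_neg (by omega), if_neg h]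
    rw [hfun]
    congr 1
    funext β
    exact chainW_indicator u _ A hA β

lemma chainW_chainProb : ∀ (t : ℕ) (D : ℕ → Set E) (A : ℕ → Set E) (s : ℕ) (α : E),
    chainW p t D (chainProb p s A) α =
      chainProb p (s + t) (fun i => if i < t then D i else A (i - t)) α
  | 0, D, A, s, α => by
    have : (fun i => if i < 0 then D i else A (i - 0)) = A := by
      funext i; simp
    rw [this]; rfl
  | (t + 1), D, A, s, α => by
    show _ = chainProb p ((s + t) + 1) _ α
    rw [chainW_succ, chainProb_succ]
    have h0 : (if 0 < t + 1 then D 0 else A (0 - (t + 1))) = D 0 := if_pos (by omega)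
    rw [h0]
    have hfun : (fun i => if i + 1 < t + 1 then D (i + 1) else A (i + 1 - (t + 1))) =
        (fun i => if i < t then D (i + 1) else A (i - t)) := by
      funext i; by_cases h : i < t
      · rw [if_pos (by omega), if_pos h]
      · rw [if_neg (by omega), if_neg h, show i + 1 - (t + 1) = i - t from by omega]
    rw [hfun]
    congr 1
    funext β
    exact chainW_chainProb t _ A s β


lemma lintegral_cylSet_eval (m : Measure E) [IsProbabilityMeasure m]
    (P : Measure (ℕ → E)) [IsProbabilityMeasure P] (hP : IsMarkovMeasure p m P)
    (t : ℕ) (B : ℕ → Set E) (hB : ∀ i, MeasurableSet (B i))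
    {g : E → ℝ≥0∞} (hg : Measurable g) :
    ∫⁻ ω in cylSet t B, g (ω t) ∂P = ∫⁻ α in B 0, chainW p t (fun i => B (i + 1)) g α ∂m := by
  refine Measurable.ennreal_induction
    (motive := fun g => ∫⁻ ω in cylSet t B, g (ω t) ∂P
      = ∫⁻ α in B 0, chainW p t (fun i => B (i + 1)) g α ∂m) ?_ ?_ ?_ hg
  · -- indicator case
    intro c s hs
    set B' : ℕ → Set E := fun i => if i = t then B i ∩ s else B i with hB'def
    have hB'm : ∀ i, MeasurableSet (B' i) := by
      intro i; by_cases h : i = t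
      · simp only [B', if_pos h]; exact (hB i).inter hs
      · simp only [B', if_neg h]; exact hB i
    have hcmul : ∀ α, chainW p t (fun i => B (i + 1)) (s.indicator fun _ => c) α
        = c * chainW p t (fun i => B (i + 1)) (s.indicator (1 : E → ℝ≥0∞)) α := by
      intro α
      have h1 : (s.indicator fun _ => c) = fun β => c * (s.indicator (1 : E → ℝ≥0∞)) β := by
        funext β; by_cases h : β ∈ s <;> simp [h]
      rw [h1]
      exact chainW_const_mul p t _ (fun i => hB (i + 1)) c _ (measurable_one.indicator hs) α
    have hRHS : ∫⁻ α in B 0, chainW p t (fun i => B (i + 1)) (s.indicator fun _ => c) α ∂m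
        = c * ∫⁻ α in B 0, chainW p t (fun i => B (i + 1)) (s.indicator (1 : E → ℝ≥0∞)) α ∂m := by
      rw [lintegral_congr hcmul,
        lintegral_const_mul c (chainW_measurable p t _ (fun i => hB (i + 1))
          (s.indicator (1 : E → ℝ≥0∞)) (measurable_one.indicator hs))]
    rw [hRHS]
    have hind : ∀ ω : ℕ → E, (s.indicator (fun _ => c)) (ω t)
        = (((fun ω : ℕ → E => ω t) ⁻¹' s).indicator (fun _ => c)) ω := by
      intro ω; by_cases h : ω t ∈ s <;> simp [Set.indicator, h, Set.mem_preimage]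
    calc ∫⁻ ω in cylSet t B, (s.indicator fun _ => c) (ω t) ∂P
        = ∫⁻ ω in cylSet t B, (((fun ω : ℕ → E => ω t) ⁻¹' s).indicator (fun _ => c)) ω ∂P :=
          lintegral_congr fun ω => hind ω
      _ = c * (P.restrict (cylSet t B)) ((fun ω : ℕ → E => ω t) ⁻¹' s) :=
          lintegral_indicator_const ((measurable_pi_apply t) hs) c
      _ = c * P (((fun ω : ℕ → E => ω t) ⁻¹' s) ∩ cylSet t B) := by
          rw [Measure.restrict_apply ((measurable_pi_apply t) hs)]
      _ = c * P (cylSet t B') := by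
          congr 2
          ext ω
          simp only [Set.mem_inter_iff, Set.mem_preimage, cylSet, Set.mem_setOf_eq]
          constructor
          · rintro ⟨hs', hcyl⟩ i hi
            by_cases h : i = t
            · subst h; simp only [B', if_pos rfl]; exact ⟨hcyl i hi, hs'⟩
            · simp only [B', if_neg h]; exact hcyl i hi
          · intro H
            refine ⟨?_, fun i hi => ?_⟩
            · have := H t le_rfl; simp only [B', if_pos rfl] at this; exact this.2
            · by_cases h : i = t
              · subst h; have := H i hi; simp only [B', if_pos rfl] at this; exact this.1
              · have := H i hi; simpa only [B', if_neg h] using this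
      _ = c * ∫⁻ α in B' 0, chainProb p t (fun i => B' (i + 1)) α ∂m :=
          congrArg (fun x => c * x) (hP t B' hB'm)
      _ = c * ∫⁻ α in B 0, chainW p t (fun i => B (i + 1)) (s.indicator (1 : E → ℝ≥0∞)) α ∂m := by
          congr 1
          rcases t with _ | u
          · have h0 : B' 0 = B 0 ∩ s := by simp only [B', if_pos rfl]
            have hz : ∀ α, chainProb p 0 (fun i => B' (i + 1)) α = 1 := fun _ => rfl
            rw [lintegral_congr hz, setLIntegral_one, h0]
            have hz2 : ∀ α, chainW p 0 (fun i => B (i + 1)) (s.indicator (1 : E → ℝ≥0∞)) α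
                = s.indicator (1 : E → ℝ≥0∞) α := fun _ => rfl
            rw [lintegral_congr hz2, lintegral_indicator_one hs, Measure.restrict_apply hs,
              inter_comm]
          · have h0 : B' 0 = B 0 := by simp only [B']; rw [if_neg (by omega)]
            rw [h0]
            have hsets : (fun i => B' (i + 1))
                = (fun i => if i = u then B (i + 1) ∩ s else B (i + 1)) := by
              funext i; by_cases h : i = u
              · simp only [B']; rw [if_pos (by omega), if_pos h]
              · simp only [B']; rw [if_neg (by omega), if_neg h]
            rw [hsets]
            exact lintegral_congr fun α => (chainW_indicator p u _ s hs α).symm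
  · -- additive case
    intro f g _ hf hg ihf ihg
    have h1 : ∫⁻ ω in cylSet t B, (f + g) (ω t) ∂P
        = (∫⁻ ω in cylSet t B, f (ω t) ∂P) + ∫⁻ ω in cylSet t B, g (ω t) ∂P := by
      simp only [Pi.add_apply]
      exact lintegral_add_left (hf.comp (measurable_pi_apply t)) _
    have h2 : ∀ α, chainW p t (fun i => B (i + 1)) (f + g) α
        = chainW p t (fun i => B (i + 1)) f α + chainW p t (fun i => B (i + 1)) g α := by
      intro α
      have : (f + g) = fun β => f β + g β := rfl
      rw [this]
      exact chainW_add p t _ (fun i => hB (i + 1)) f g hf α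
    rw [h1, lintegral_congr h2,
      lintegral_add_left (chainW_measurable p t _ (fun i => hB (i + 1)) f hf) _, ihf, ihg]
  · -- iSup case
    intro f hfm hmono ihf
    have h1 : ∫⁻ ω in cylSet t B, (fun x => ⨆ j, f j x) (ω t) ∂P
        = ⨆ j, ∫⁻ ω in cylSet t B, f j (ω t) ∂P :=
      lintegral_iSup (fun j => (hfm j).comp (measurable_pi_apply t))
        (fun i j hij ω => hmono hij _)
    have h2 : ∀ α, chainW p t (fun i => B (i + 1)) (fun x => ⨆ j, f j x) α
        = ⨆ j, chainW p t (fun i => B (i + 1)) (f j) α :=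
      chainW_iSup p t _ (fun i => hB (i + 1)) f hfm hmono
    rw [h1, lintegral_congr h2,
      lintegral_iSup (fun j => chainW_measurable p t _ (fun i => hB (i + 1)) (f j) (hfm j))
        (fun i j hij α => chainW_mono p t _ _ _ (hmono hij) α)]
    exact iSup_congr ihf

lemma lintegral_cylSet_eval0 (m : Measure E) [IsProbabilityMeasure m]
    (P : Measure (ℕ → E)) [IsProbabilityMeasure P] (hP : IsMarkovMeasure p m P)
    (N : ℕ) (A : ℕ → Set E) (hA : ∀ i, MeasurableSet (A i))
    {g : E → ℝ≥0∞} (hg : Measurable g) :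
    ∫⁻ ϑ in cylSet N A, g (ϑ 0) ∂P
      = ∫⁻ β in A 0, chainProb p N (fun i => A (i + 1)) β * g β ∂m := by
  have hmeq : (P.restrict (cylSet N A)).map (fun ϑ => ϑ 0)
      = (m.restrict (A 0)).withDensity (chainProb p N (fun i => A (i + 1))) := by
    ext V hV
    rw [Measure.map_apply (measurable_pi_apply 0) hV,
      Measure.restrict_apply ((measurable_pi_apply 0) hV)]
    set A'' : ℕ → Set E := fun j => if j = 0 then A 0 ∩ V else A j with hA''def
    have hA''m : ∀ j, MeasurableSet (A'' j) := by
      intro j; by_cases h : j = 0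
      · simp only [A'', if_pos h]; exact (hA 0).inter hV
      · simp only [A'', if_neg h]; exact hA j
    have hset : (fun ϑ : ℕ → E => ϑ 0) ⁻¹' V ∩ cylSet N A = cylSet N A'' := by
      ext ω
      simp only [Set.mem_inter_iff, Set.mem_preimage, cylSet, Set.mem_setOf_eq]
      constructor
      · rintro ⟨hv, hcyl⟩ i hi
        by_cases h : i = 0
        · subst h; simp only [A'', if_pos rfl]; exact ⟨hcyl 0 hi, hv⟩
        · simp only [A'', if_neg h]; exact hcyl i hi
      · intro H
        refine ⟨?_, fun i hi => ?_⟩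
        · have := H 0 (Nat.zero_le N); simp only [A'', if_pos rfl] at this; exact this.2
        · by_cases h : i = 0
          · subst h; have := H 0 hi; simp only [A'', if_pos rfl] at this; exact this.1
          · have := H i hi; simpa only [A'', if_neg h] using this
    rw [hset]
    have h1 := hP N A'' hA''m
    have h2 : (fun i => A'' (i + 1)) = fun i => A (i + 1) := by
      funext i; simp only [A'']; rw [if_neg (by omega)]
    rw [h2] at h1
    have h3 : A'' 0 = A 0 ∩ V := by simp only [A'', if_pos rfl]
    rw [h3] at h1
    rw [withDensity_apply _ hV, Measure.restrict_restrict hV, Set.inter_comm V (A 0)]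
    exact h1
  calc ∫⁻ ϑ in cylSet N A, g (ϑ 0) ∂P
      = ∫⁻ x, g x ∂((P.restrict (cylSet N A)).map (fun ϑ => ϑ 0)) :=
        (lintegral_map hg (measurable_pi_apply 0)).symm
    _ = ∫⁻ x, g x ∂((m.restrict (A 0)).withDensity (chainProb p N (fun i => A (i + 1)))) := by
        rw [hmeq]
    _ = ∫⁻ β in A 0, chainProb p N (fun i => A (i + 1)) β * g β ∂m := by
        rw [lintegral_withDensity_eq_lintegral_mul _
          (chainProb_measurable p N _ (fun i => hA (i + 1))) hg]
        rfl


def cylCol (E : Type*) [MeasurableSpace E] : Set (Set (ℕ → E)) :=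
  {S | ∃ N, ∃ A : ℕ → Set E, (∀ i, MeasurableSet (A i)) ∧ S = cylSet N A}

lemma isPiSystem_cylCol : IsPiSystem (cylCol E) := by
  rintro S₁ ⟨N₁, A₁, hA₁, rfl⟩ S₂ ⟨N₂, A₂, hA₂, rfl⟩ _
  refine ⟨max N₁ N₂,
    fun i => (if i ≤ N₁ then A₁ i else univ) ∩ (if i ≤ N₂ then A₂ i else univ), ?_, ?_⟩
  · intro i
    refine MeasurableSet.inter ?_ ?_ <;> split_ifs <;>
      first | exact hA₁ _ | exact hA₂ _ | exact MeasurableSet.univ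
  · ext ω
    simp only [cylSet, Set.mem_inter_iff, Set.mem_setOf_eq]
    constructor
    · rintro ⟨h1, h2⟩ i hi
      constructor
      · split_ifs with h
        · exact h1 i h
        · trivial
      · split_ifs with h
        · exact h2 i h
        · trivial
    · intro H
      constructor
      · intro i hi
        have := (H i (le_trans hi (le_max_left _ _))).1
        rwa [if_pos hi] at this
      · intro i hi
        have := (H i (le_trans hi (le_max_right _ _))).2
        rwa [if_pos hi] at this

lemma generateFrom_cylCol :
    MeasurableSpace.generateFrom (cylCol E) = (inferInstance : MeasurableSpace (ℕ → E)) := by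
  apply le_antisymm
  · refine MeasurableSpace.generateFrom_le ?_
    rintro S ⟨N, A, hA, rfl⟩
    exact measurableSet_cylSet hA
  · have hpi : (inferInstance : MeasurableSpace (ℕ → E))
        = ⨆ i : ℕ, MeasurableSpace.comap (fun ω : ℕ → E => ω i) inferInstance := rfl
    rw [hpi]
    refine iSup_le fun i => ?_
    intro s hs
    obtain ⟨A, hA, rfl⟩ := hs
    refine MeasurableSpace.measurableSet_generateFrom
      ⟨i, fun j => if j = i then A else univ, ?_, ?_⟩
    · intro j; dsimp only; split_ifs; exacts [hA, MeasurableSet.univ]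
    · ext ω
      simp only [cylSet, Set.mem_preimage, Set.mem_setOf_eq]
      constructor
      · intro h j hj
        split_ifs with hji
        · subst hji; exact h
        · trivial
      · intro H
        have := H i le_rfl
        rwa [if_pos rfl] at this

lemma markov_joint (p : Kernel E E) [IsMarkovKernel p]
    (m : Measure E) [IsProbabilityMeasure m]
    (k : E → E → ℝ≥0∞) (hk : Measurable fun z : E × E => k z.1 z.2)
    (hdens : ∀ α, (p α : Measure E) = m.withDensity (k α))
    (P : Measure (ℕ → E)) [IsProbabilityMeasure P] (hP : IsMarkovMeasure p m P)
    (n : ℕ) (hn : 1 ≤ n)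
    (κ : Kernel (Fin n → E) (ℕ → E)) [IsSFiniteKernel κ]
    (hκ : ∀ a, κ a = P.withDensity fun ϑ => k (a ⟨n - 1, by omega⟩) (ϑ 0)) :
    P.map (fun ω => (fun i : Fin n => ω (i : ℕ), fun i => ω (i + n)))
      = (P.map (fun ω (i : Fin n) => ω (i : ℕ))) ⊗ₘ κ := by
  have hπ : Measurable fun ω : ℕ → E => (fun i : Fin n => ω (i : ℕ)) :=
    measurable_pi_lambda _ fun i => measurable_pi_apply _
  have hσ : Measurable fun ω : ℕ → E => (fun i : ℕ => ω (i + n)) :=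
    measurable_pi_lambda _ fun i => measurable_pi_apply _
  have hT : Measurable fun ω : ℕ → E =>
      ((fun i : Fin n => ω (i : ℕ)), fun i : ℕ => ω (i + n)) := hπ.prodMk hσ
  haveI h1 : IsProbabilityMeasure (P.map (fun ω (i : Fin n) => ω (i : ℕ))) :=
    Measure.isProbabilityMeasure_map hπ.aemeasurable
  haveI h2 : IsProbabilityMeasure
      (P.map (fun ω => (fun i : Fin n => ω (i : ℕ), fun i : ℕ => ω (i + n)))) :=
    Measure.isProbabilityMeasure_map hT.aemeasurable
  have hval : ∀ B : Fin n → Set E, (∀ i, MeasurableSet (B i)) →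
      ∀ (N : ℕ) (A : ℕ → Set E), (∀ i, MeasurableSet (A i)) →
      (P.map (fun ω => (fun i : Fin n => ω (i : ℕ), fun i : ℕ => ω (i + n))))
          ((univ.pi B) ×ˢ cylSet N A)
        = ((P.map (fun ω (i : Fin n) => ω (i : ℕ))) ⊗ₘ κ) ((univ.pi B) ×ˢ cylSet N A) := by
    intro B hBm N A hA
    set Bext : ℕ → Set E := fun i => if h : i < n then B ⟨i, h⟩ else univ with hBextdef
    have hBextm : ∀ i, MeasurableSet (Bext i) := by
      intro i; simp only [Bext]; split_ifs; exacts [hBm _, MeasurableSet.univ]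
    have hpiB : MeasurableSet (univ.pi B) := MeasurableSet.univ_pi hBm
    have hcylA : MeasurableSet (cylSet N A) := measurableSet_cylSet hA
    have hGm : ∀ i, MeasurableSet ((fun i => if i < n then Bext i else A (i - n)) i) := by
      intro i; dsimp only; by_cases h : i < n
      · rw [if_pos h]; exact hBextm i
      · rw [if_neg h]; exact hA _
    have hpre : (fun ω : ℕ → E => ((fun i : Fin n => ω (i : ℕ)), fun i : ℕ => ω (i + n))) ⁻¹'
          ((univ.pi B) ×ˢ cylSet N A)
        = cylSet (n + N) (fun i => if i < n then Bext i else A (i - n)) := by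
      ext ω
      simp only [Set.mem_preimage, Set.mem_prod, Set.mem_univ_pi, cylSet, Set.mem_setOf_eq]
      constructor
      · rintro ⟨ha, hb⟩ i hi
        by_cases h : i < n
        · rw [if_pos h]; simp only [Bext]; rw [dif_pos h]; exact ha ⟨i, h⟩
        · rw [if_neg h]
          have := hb (i - n) (by omega)
          rwa [show i - n + n = i from by omega] at this
      · intro H
        constructor
        · intro i
          have := H (i : ℕ) (by have := i.isLt; omega)
          rw [if_pos i.isLt] at this
          simp only [Bext] at this
          rw [dif_pos i.isLt] at this
          exact this
        · intro j hj
          have := H (j + n) (by omega)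
          rw [if_neg (by omega)] at this
          rwa [show j + n - n = j from by omega] at this
    have key := hP (n + N) (fun i => if i < n then Bext i else A (i - n)) hGm
    beta_reduce at key
    rw [if_pos (show 0 < n from by omega)] at key
    have hshift : (fun i => if i + 1 < n then Bext (i + 1) else A (i + 1 - n))
        = (fun i => if i < n - 1 then Bext (i + 1) else A (i - (n - 1))) := by
      funext i; by_cases h : i + 1 < n
      · rw [if_pos h, if_pos (by omega)]
      · rw [if_neg h, if_neg (by omega), show i + 1 - n = i - (n - 1) from by omega]
    rw [hshift] at key
    rw [Measure.map_apply hT (hpiB.prod hcylA), hpre]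
    rw [Measure.compProd_apply_prod hpiB hcylA]
    have hκval : ∀ a : Fin n → E,
        κ a (cylSet N A) = chainProb p (N + 1) A (a ⟨n - 1, by omega⟩) := by
      intro a
      rw [hκ a, withDensity_apply _ hcylA]
      have hgk : Measurable (k (a ⟨n - 1, by omega⟩)) :=
        hk.comp (measurable_const.prodMk measurable_id)
      rw [lintegral_cylSet_eval0 p m P hP N A hA hgk]
      rw [chainProb_succ, hdens, restrict_withDensity (hA 0),
        lintegral_withDensity_eq_lintegral_mul _ hgk
          (chainProb_measurable p N _ (fun i => hA (i + 1)))]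
      refine lintegral_congr fun β => ?_
      simp only [Pi.mul_apply]
      exact mul_comm _ _
    simp only [hκval]
    have hfm : Measurable fun a : Fin n → E => chainProb p (N + 1) A (a ⟨n - 1, by omega⟩) :=
      (chainProb_measurable p (N + 1) A hA).comp (measurable_pi_apply _)
    rw [setLIntegral_map hpiB hfm hπ]
    have hpre2 : (fun ω : ℕ → E => fun i : Fin n => ω (i : ℕ)) ⁻¹' (univ.pi B)
        = cylSet (n - 1) Bext := by
      ext ω
      simp only [Set.mem_preimage, Set.mem_univ_pi, cylSet, Set.mem_setOf_eq]
      constructor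
      · intro H i hi
        simp only [Bext]; rw [dif_pos (show i < n by omega)]
        exact H ⟨i, by omega⟩
      · intro H i
        have := H (i : ℕ) (by have := i.isLt; omega)
        simp only [Bext] at this
        rw [dif_pos i.isLt] at this
        exact this
    rw [hpre2]
    rw [lintegral_cylSet_eval p m P hP (n - 1) Bext hBextm
      (chainProb_measurable p (N + 1) A hA)]
    have hglue : ∀ α, chainW p (n - 1) (fun i => Bext (i + 1)) (chainProb p (N + 1) A) α
        = chainProb p (n + N) (fun i => if i < n - 1 then Bext (i + 1) else A (i - (n - 1))) α := by
      intro α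
      rw [chainW_chainProb p (n - 1) _ A (N + 1) α,
        show N + 1 + (n - 1) = n + N from by omega]
    rw [lintegral_congr hglue]
    exact key
  have hgen : (inferInstance : MeasurableSpace ((Fin n → E) × (ℕ → E)))
      = MeasurableSpace.generateFrom (Set.image2 (· ×ˢ ·)
          (pi univ '' pi univ fun _ : Fin n => {s : Set E | MeasurableSet s}) (cylCol E)) := by
    have g1 : MeasurableSpace.generateFrom
        (pi univ '' pi univ fun _ : Fin n => {s : Set E | MeasurableSet s})
        = (inferInstance : MeasurableSpace (Fin n → E)) := generateFrom_pi
    have g2 := generateFrom_cylCol (E := E)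
    have hspan2 : IsCountablySpanning (cylCol E) :=
      ⟨fun _ => univ, fun _ => ⟨0, fun _ => univ, fun _ => MeasurableSet.univ,
        by ext ω; simp [cylSet]⟩, Set.iUnion_const _⟩
    have := generateFrom_prod_eq
      (C := pi univ '' pi univ fun _ : Fin n => {s : Set E | MeasurableSet s}) (D := cylCol E)
      (IsCountablySpanning.pi fun _ => isCountablySpanning_measurableSet) hspan2
    rw [g1, g2] at this
    exact this
  refine ext_of_generate_finite _ hgen (isPiSystem_pi.prod isPiSystem_cylCol) ?_ ?_
  · rintro _ ⟨s₁, hs₁, S₂, hS₂, rfl⟩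
    obtain ⟨B, hBmem, rfl⟩ := hs₁
    obtain ⟨N, A, hA, rfl⟩ := hS₂
    exact hval B (fun i => hBmem i trivial) N A hA
  · have huniv : ((univ.pi fun _ : Fin n => (univ : Set E))
        ×ˢ cylSet 0 (fun _ => (univ : Set E))) = univ := by
      ext z; simp [cylSet]
    rw [← huniv]
    exact hval _ (fun _ => MeasurableSet.univ) 0 _ (fun _ => MeasurableSet.univ)


lemma skewF_iterate {E M : Type*} (f : E → M → M) :
    ∀ (t : ℕ) (ω : ℕ → E) (x : M),
      (skewF f)^[t] (ω, x) = (fun i => ω (i + t), iterRI f ω t x)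
  | 0, ω, x => rfl
  | (t + 1), ω, x => by
    rw [Function.iterate_succ_apply', skewF_iterate f t ω x]
    refine Prod.ext ?_ ?_
    · funext i
      show ω (i + 1 + t) = ω (i + (t + 1))
      congr 1; omega
    · show f (ω (0 + t)) (iterRI f ω t x) = iterRI f ω (t + 1) x
      rw [Nat.zero_add]
      rfl

lemma iterRI_congr {E M : Type*} (f : E → M → M) :
    ∀ (t : ℕ) (ω ω' : ℕ → E) (x : M), (∀ i < t, ω i = ω' i) →
      iterRI f ω t x = iterRI f ω' t x
  | 0, _, _, _, _ => rfl
  | (t + 1), ω, ω', x, hcoord => by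
    show f (ω t) (iterRI f ω t x) = f (ω' t) (iterRI f ω' t x)
    rw [hcoord t (by omega), iterRI_congr f t ω ω' x (fun i hi => hcoord i (by omega))]

lemma iterRI_measurable {E M : Type*} [MeasurableSpace E] [MeasurableSpace M]
    (f : E → M → M) (hf : Measurable fun z : E × M => f z.1 z.2) (x : M) :
    ∀ t : ℕ, Measurable fun ω : ℕ → E => iterRI f ω t x
  | 0 => measurable_const
  | (t + 1) => by
    show Measurable fun ω : ℕ → E => f (ω t) (iterRI f ω t x)
    exact hf.comp ((measurable_pi_apply t).prodMk (iterRI_measurable f hf x t))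

end CondAux

/-- Lemma 4.1. For a bounded Markovian random iteration with constant
`C` and a measurable `h ≥ h ∘ F`, one has
`𝔼(h(Fⁿ(·,x₀)) | 𝓕_{n-1}) ≥ C · h̄(f_ω^n(x₀))` ℙ-a.s., stated equivalently as the
defining integral inequality over all sets `D ∈ 𝓕_{n-1}`, where
`h̄(x) = ∫ h(ω,x) dℙ(ω)`. -/
theorem condexp_lower_bound {E M : Type*}
    [MeasurableSpace E] [StandardBorelSpace E] [MeasurableSpace M] [StandardBorelSpace M]
    (p : ProbabilityTheory.Kernel E E) [IsMarkovKernel p]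
    (m : Measure E) [IsProbabilityMeasure m]
    (hstat : ∀ A : Set E, MeasurableSet A → m A = ∫⁻ α, p α A ∂m)
    (huniq : ∀ m' : Measure E, IsProbabilityMeasure m' →
      (∀ A : Set E, MeasurableSet A → m' A = ∫⁻ α, p α A ∂m') → m' = m)
    (C : ℝ≥0∞) (hC0 : 0 < C) (hC1 : C ≤ 1)
    (k : E → E → ℝ≥0∞) (hk : Measurable fun z : E × E => k z.1 z.2)
    (hdens : ∀ α, (p α : Measure E) = m.withDensity (k α))
    (hbound : ∀ α β, C ≤ k α β ∧ k α β ≤ C⁻¹)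
    (f : E → M → M) (hf : Measurable fun z : E × M => f z.1 z.2)
    (P : Measure (ℕ → E)) [IsProbabilityMeasure P] (hP : IsMarkovMeasure p m P)
    (h : (ℕ → E) × M → ℝ≥0∞) (hh : Measurable h)
    (hmono : ∀ z, h (skewF f z) ≤ h z)
    (n : ℕ) (hn : 1 ≤ n) (x₀ : M)
    (D : Set (ℕ → E)) (hD : MeasurableSet[coordSigma E n] D) :
    C * ∫⁻ ω in D, (∫⁻ ϑ, h (ϑ, iterRI f ω n x₀) ∂P) ∂P ≤
      ∫⁻ ω in D, h ((skewF f)^[n] (ω, x₀)) ∂P := by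
  classical
  have hD2 : ∃ D' : Set (Fin n → E), MeasurableSet D' ∧
      (fun (ω : ℕ → E) (i : Fin n) => ω (i : ℕ)) ⁻¹' D' = D := hD
  obtain ⟨D', hD', rfl⟩ := hD2
  have hπ : Measurable fun ω : ℕ → E => (fun i : Fin n => ω (i : ℕ)) :=
    measurable_pi_lambda _ fun i => measurable_pi_apply _
  have hw : Measurable fun z : (Fin n → E) × (ℕ → E) => k (z.1 ⟨n - 1, by omega⟩) (z.2 0) :=
    hk.comp (((measurable_pi_apply (⟨n - 1, by omega⟩ : Fin n)).comp
      (measurable_fst : Measurable fun z : (Fin n → E) × (ℕ → E) => z.1)).prodMk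
      ((measurable_pi_apply 0).comp
        (measurable_snd : Measurable fun z : (Fin n → E) × (ℕ → E) => z.2)))
  have hκmeas : Measurable fun a : Fin n → E =>
      P.withDensity fun ϑ => k (a ⟨n - 1, by omega⟩) (ϑ 0) := by
    apply Measure.measurable_of_measurable_coe
    intro s hs
    have h1 : ∀ a : Fin n → E,
        (P.withDensity fun ϑ => k (a ⟨n - 1, by omega⟩) (ϑ 0)) s
        = ∫⁻ ϑ, s.indicator (fun ϑ => k (a ⟨n - 1, by omega⟩) (ϑ 0)) ϑ ∂P := by
      intro a
      rw [withDensity_apply _ hs, lintegral_indicator hs]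
    simp_rw [h1]
    have h2 : (fun z : (Fin n → E) × (ℕ → E) =>
        s.indicator (fun ϑ => k (z.1 ⟨n - 1, by omega⟩) (ϑ 0)) z.2)
        = fun z : (Fin n → E) × (ℕ → E) =>
          if z.2 ∈ s then k (z.1 ⟨n - 1, by omega⟩) (z.2 0) else 0 := by
      funext z
      by_cases hz : z.2 ∈ s <;> simp [Set.indicator, hz]
    have h3 : Measurable fun z : (Fin n → E) × (ℕ → E) =>
        s.indicator (fun ϑ => k (z.1 ⟨n - 1, by omega⟩) (ϑ 0)) z.2 := by
      rw [h2]
      exact Measurable.ite (measurable_snd hs) hw measurable_const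
    exact h3.lintegral_prod_right'
  set κ : Kernel (Fin n → E) (ℕ → E) :=
    ⟨fun a => P.withDensity fun ϑ => k (a ⟨n - 1, by omega⟩) (ϑ 0), hκmeas⟩ with hκdef
  have hκ : ∀ a, κ a = P.withDensity fun ϑ => k (a ⟨n - 1, by omega⟩) (ϑ 0) := fun _ => rfl
  have hka : ∀ a : Fin n → E, Measurable fun ϑ : ℕ → E => k (a ⟨n - 1, by omega⟩) (ϑ 0) :=
    fun a => (hk.comp (measurable_const.prodMk measurable_id)).comp (measurable_pi_apply 0)
  haveI hκfin : IsFiniteKernel κ := by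
    refine ⟨⟨C⁻¹, ENNReal.inv_lt_top.2 hC0, fun a => ?_⟩⟩
    rw [hκ a, withDensity_apply _ MeasurableSet.univ, Measure.restrict_univ]
    calc ∫⁻ ϑ, k (a ⟨n - 1, by omega⟩) (ϑ 0) ∂P ≤ ∫⁻ _, C⁻¹ ∂P :=
          lintegral_mono fun ϑ => (hbound _ _).2
      _ = C⁻¹ := by rw [lintegral_const, measure_univ, mul_one]
  have key := CondAux.markov_joint p m k hk hdens P hP n hn κ hκ
  set extn : (Fin n → E) → (ℕ → E) :=
    fun a i => if hi : i < n then a ⟨i, hi⟩ else a ⟨0, by omega⟩ with hextn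
  have hextm : Measurable extn := by
    apply measurable_pi_lambda
    intro i
    simp only [extn]
    by_cases hi : i < n
    · simp only [dif_pos hi]; exact measurable_pi_apply _
    · simp only [dif_neg hi]; exact measurable_pi_apply _
  have hitFm : Measurable fun a : Fin n → E => iterRI f (extn a) n x₀ :=
    (CondAux.iterRI_measurable f hf x₀ n).comp hextm
  have hiter_pi : ∀ ω : ℕ → E,
      iterRI f (extn fun i : Fin n => ω (i : ℕ)) n x₀ = iterRI f ω n x₀ := by
    intro ω
    apply CondAux.iterRI_congr
    intro i hi
    simp only [extn]
    rw [dif_pos hi]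
  set G : (Fin n → E) × (ℕ → E) → ℝ≥0∞ :=
    fun z => if z.1 ∈ D' then h (z.2, iterRI f (extn z.1) n x₀) else 0 with hGdef
  have hG : Measurable G :=
    Measurable.ite (hD'.preimage measurable_fst)
      (hh.comp (measurable_snd.prodMk (hitFm.comp measurable_fst))) measurable_const
  have hT : Measurable fun ω : ℕ → E =>
      ((fun i : Fin n => ω (i : ℕ)), fun i : ℕ => ω (i + n)) :=
    hπ.prodMk (measurable_pi_lambda _ fun i => measurable_pi_apply _)
  haveI : IsProbabilityMeasure (P.map (fun ω (i : Fin n) => ω (i : ℕ))) :=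
    Measure.isProbabilityMeasure_map hπ.aemeasurable
  have hDmeas : MeasurableSet ((fun (ω : ℕ → E) (i : Fin n) => ω (i : ℕ)) ⁻¹' D') := hD'.preimage hπ
  have hR : ∫⁻ ω in (fun (ω : ℕ → E) (i : Fin n) => ω (i : ℕ)) ⁻¹' D', h ((skewF f)^[n] (ω, x₀)) ∂P
      = ∫⁻ z, G z
          ∂(P.map (fun ω => ((fun i : Fin n => ω (i : ℕ)), fun i : ℕ => ω (i + n)))) := by
    rw [lintegral_map hG hT, ← lintegral_indicator hDmeas]
    refine lintegral_congr fun ω => ?_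
    by_cases hω : (fun i : Fin n => ω (i : ℕ)) ∈ D'
    · rw [Set.indicator_of_mem (show ω ∈ (fun (ω : ℕ → E) (i : Fin n) => ω (i : ℕ)) ⁻¹' D' from hω), CondAux.skewF_iterate f n ω x₀]
      simp only [hGdef]
      rw [if_pos hω, hiter_pi ω]
    · rw [Set.indicator_of_notMem (show ω ∉ (fun (ω : ℕ → E) (i : Fin n) => ω (i : ℕ)) ⁻¹' D' from hω)]
      simp only [hGdef]
      rw [if_neg hω]
  have hGa : ∀ a : Fin n → E, Measurable fun ϑ => G (a, ϑ) :=
    fun a => hG.comp measurable_prodMk_left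
  have hstep : ∀ a : Fin n → E, C * ∫⁻ ϑ, G (a, ϑ) ∂P ≤ ∫⁻ ϑ, G (a, ϑ) ∂(κ a) := by
    intro a
    rw [hκ a, lintegral_withDensity_eq_lintegral_mul _ (hka a) (hGa a),
      ← lintegral_const_mul C (hGa a)]
    refine lintegral_mono fun ϑ => ?_
    simp only [Pi.mul_apply]
    exact mul_le_mul_left (hbound _ _).1 _
  have hinner : Measurable fun a : Fin n → E => ∫⁻ ϑ, G (a, ϑ) ∂P :=
    hG.lintegral_prod_right'
  calc C * ∫⁻ ω in (fun (ω : ℕ → E) (i : Fin n) => ω (i : ℕ)) ⁻¹' D',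
        (∫⁻ ϑ, h (ϑ, iterRI f ω n x₀) ∂P) ∂P
      = C * ∫⁻ a, (∫⁻ ϑ, G (a, ϑ) ∂P) ∂(P.map (fun ω (i : Fin n) => ω (i : ℕ))) := by
        congr 1
        rw [lintegral_map hinner hπ, ← lintegral_indicator hDmeas]
        refine lintegral_congr fun ω => ?_
        by_cases hω : (fun i : Fin n => ω (i : ℕ)) ∈ D'
        · rw [Set.indicator_of_mem (show ω ∈ (fun (ω : ℕ → E) (i : Fin n) => ω (i : ℕ)) ⁻¹' D' from hω)]
          refine lintegral_congr fun ϑ => ?_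
          simp only [hGdef]
          rw [if_pos hω, hiter_pi ω]
        · rw [Set.indicator_of_notMem (show ω ∉ (fun (ω : ℕ → E) (i : Fin n) => ω (i : ℕ)) ⁻¹' D' from hω)]
          have hz : ∀ ϑ : ℕ → E, G ((fun i : Fin n => ω (i : ℕ)), ϑ) = 0 := by
            intro ϑ
            simp only [hGdef]
            rw [if_neg hω]
          rw [lintegral_congr hz, lintegral_zero]
    _ ≤ ∫⁻ a, (∫⁻ ϑ, G (a, ϑ) ∂(κ a)) ∂(P.map (fun ω (i : Fin n) => ω (i : ℕ))) := by
        rw [← lintegral_const_mul C hinner]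
        exact lintegral_mono hstep
    _ = ∫⁻ z, G z ∂((P.map (fun ω (i : Fin n) => ω (i : ℕ))) ⊗ₘ κ) :=
        (Measure.lintegral_compProd hG).symm
    _ = ∫⁻ z, G z
          ∂(P.map (fun ω => ((fun i : Fin n => ω (i : ℕ)), fun i : ℕ => ω (i + n)))) := by
        rw [key]
    _ = ∫⁻ ω in (fun (ω : ℕ → E) (i : Fin n) => ω (i : ℕ)) ⁻¹' D', h ((skewF f)^[n] (ω, x₀)) ∂P :=
        hR.symm
end

section
/- Let φ be a bounded Markovian random iteration of homeomorphisms of the circle S¹ (with constant C), and suppose μ̂ ∈ I₀(φ) is an F-invariant measure with disintegration μ̂_ω = μ_{ω₀} satisfying (f_{ω₀})_*μ̂_ω = μ̂_{σ(ω)} for ℙ-almost every ω. Then the map α ↦ μ_α is m-almost everywhere constant equal to some probability measure μ on S¹, and (f_α)_*μ = μ for m-almost every α. -/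
open MeasureTheory ProbabilityTheory ENNReal

private lemma countable_generatePiSystem_aux {α : Type*} {S : Set (Set α)} (hS : S.Countable) :
    (generatePiSystem S).Countable := by
  apply ((Set.countable_setOf_finite_subset hS).image Set.sInter).mono
  intro s hs
  induction hs with
  | base h =>
      exact ⟨{_}, ⟨Set.finite_singleton _, Set.singleton_subset_iff.2 h⟩, Set.sInter_singleton _⟩
  | inter _ _ _ ih1 ih2 =>
      obtain ⟨u, ⟨hu1, hu2⟩, rfl⟩ := ih1
      obtain ⟨v, ⟨hv1, hv2⟩, rfl⟩ := ih2
      exact ⟨u ∪ v, ⟨hu1.union hv1, Set.union_subset hu2 hv2⟩, Set.sInter_union u v⟩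

/-- For a bounded Markovian random iteration of homeomorphisms of the
circle `S¹ = ℝ/ℤ`, if `μ̂ ∈ I₀(φ)` satisfies the invariance-principle conclusion
`(f_{ω₀})_* μ̂_ω = μ̂_{σ(ω)}` for `ℙ`-a.e. `ω`, then the disintegration `α ↦ μ_α` is
`m`-a.e. constant equal to some probability measure `μ`, which is invariant under `f_α`
for `m`-a.e. `α`. -/
theorem common_invariant_measure_of_invariance_principle {E : Type*}
    [MetricSpace E] [CompactSpace E] [MeasurableSpace E] [BorelSpace E]
    (p q : ProbabilityTheory.Kernel E E) [IsMarkovKernel p] [IsMarkovKernel q]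
    (m : Measure E) [IsProbabilityMeasure m]
    (hstat : ∀ A : Set E, MeasurableSet A → m A = ∫⁻ α, p α A ∂m)
    (huniq : ∀ m' : Measure E, IsProbabilityMeasure m' →
      (∀ A : Set E, MeasurableSet A → m' A = ∫⁻ α, p α A ∂m') → m' = m)
    (hdual : ∀ A B : Set E, MeasurableSet A → MeasurableSet B →
      ∫⁻ α in B, p α A ∂m = ∫⁻ β in A, q β B ∂m)
    (C : ℝ≥0∞) (hC0 : 0 < C) (hC1 : C ≤ 1)
    (k : E → E → ℝ≥0∞) (hk : Measurable fun z : E × E => k z.1 z.2)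
    (hdens : ∀ α, (p α : Measure E) = m.withDensity (k α))
    (hbound : ∀ α β, C ≤ k α β ∧ k α β ≤ C⁻¹)
    (f : E → AddCircle (1 : ℝ) → AddCircle (1 : ℝ))
    (hf : Measurable fun z : E × AddCircle (1 : ℝ) => f z.1 z.2)
    (hhomeo : ∀ α, ∃ h : AddCircle (1 : ℝ) ≃ₜ AddCircle (1 : ℝ), ⇑h = f α)
    (P : Measure (ℕ → E)) [IsProbabilityMeasure P] (hP : IsMarkovMeasure p m P)
    (μhat : Measure ((ℕ → E) × AddCircle (1 : ℝ))) [IsProbabilityMeasure μhat]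
    (μa : E → Measure (AddCircle (1 : ℝ)))
    (hμprob : ∀ α, IsProbabilityMeasure (μa α))
    (hμmeas : ∀ B : Set (AddCircle (1 : ℝ)), MeasurableSet B → Measurable fun α => μa α B)
    (hmarg : μhat.map Prod.fst = P)
    (hμdis : ∀ (A : Set (ℕ → E)) (B : Set (AddCircle (1 : ℝ))),
      MeasurableSet A → MeasurableSet B → μhat (A ×ˢ B) = ∫⁻ ω in A, μa (ω 0) B ∂P)
    (hinv : μhat.map (skewF f) = μhat)
    (hIP : ∀ᵐ ω ∂P, (μa (ω 0)).map (f (ω 0)) = μa (ω 1)) :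
    ∃ μ : Measure (AddCircle (1 : ℝ)), IsProbabilityMeasure μ ∧
      (∀ᵐ α ∂m, μa α = μ) ∧ (∀ᵐ α ∂m, μ.map (f α) = μ) := by

  classical
  -- countable generating π-system on the circle
  set S := generatePiSystem (MeasurableSpace.countableGeneratingSet (AddCircle (1 : ℝ))) with hSdef
  have hScount : S.Countable :=
    countable_generatePiSystem_aux MeasurableSpace.countable_countableGeneratingSet
  have hSmeas : ∀ B ∈ S, MeasurableSet B :=
    fun B hB => generatePiSystem_measurableSet
      (fun s hs => MeasurableSpace.measurableSet_countableGeneratingSet hs) B hB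
  have hSgen : MeasurableSpace.generateFrom S = (inferInstance : MeasurableSpace (AddCircle (1 : ℝ))) :=
    generateFrom_generatePiSystem_eq.trans MeasurableSpace.generateFrom_countableGeneratingSet
  have hSpi : IsPiSystem S := isPiSystem_generatePiSystem _
  -- extensionality for probability measures via the π-system
  have meq : ∀ ν₁ ν₂ : Measure (AddCircle (1 : ℝ)), IsProbabilityMeasure ν₁ →
      IsProbabilityMeasure ν₂ → (∀ B ∈ S, ν₁ B = ν₂ B) → ν₁ = ν₂ := by
    intro ν₁ ν₂ h₁ h₂ h
    exact ext_of_generate_finite S hSgen.symm hSpi h (by simp [h₁.measure_univ, h₂.measure_univ])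
  -- measurability of each fiber map
  have hfα : ∀ α, Measurable (f α) := fun α => hf.comp measurable_prodMk_left
  -- the disintegration as a kernel
  let κ : Kernel E (AddCircle (1 : ℝ)) :=
    ⟨μa, Measure.measurable_of_measurable_coe μa hμmeas⟩
  haveI : IsMarkovKernel κ := ⟨fun α => hμprob α⟩
  have hκ : ∀ α, κ α = μa α := fun _ => rfl
  -- measurability of α ↦ μa α (f α ⁻¹' B)
  have hvmeas : ∀ B : Set (AddCircle (1 : ℝ)), MeasurableSet B →
      Measurable fun α => μa α (f α ⁻¹' B) := by
    intro B hB
    have ht : MeasurableSet ((fun z : E × AddCircle (1 : ℝ) => f z.1 z.2) ⁻¹' B) := hf hB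
    have := Kernel.measurable_kernel_prodMk_left (κ := κ) ht
    exact this
  -- the first-two-coordinates map
  set g : (ℕ → E) → E × E := fun ω => (ω 0, ω 1) with hgdef
  have hg : Measurable g := (measurable_pi_apply 0).prodMk (measurable_pi_apply 1)
  haveI : IsProbabilityMeasure (P.map g) := Measure.isProbabilityMeasure_map hg.aemeasurable
  -- the law of the first two coordinates is m ⊗ₘ p
  have hmap : P.map g = m ⊗ₘ p := by
    refine ext_of_generate_finite _ generateFrom_prod.symm isPiSystem_prod ?_ ?_
    · rintro s ⟨A, hA, B, hB, rfl⟩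
      have hA : MeasurableSet A := hA
      have hB : MeasurableSet B := hB
      rw [Measure.map_apply hg (hA.prod hB), Measure.compProd_apply_prod hA hB]
      set A' : ℕ → Set E := fun i => if i = 0 then A else B with hA'def
      have hA'meas : ∀ i, MeasurableSet (A' i) := by
        intro i; by_cases h : i = 0 <;> simp [hA'def, h, hA, hB]
      have hset : g ⁻¹' (A ×ˢ B) = {ω | ∀ i ≤ 1, ω i ∈ A' i} := by
        ext ω
        constructor
        · rintro ⟨h0, h1⟩ i hi
          interval_cases i <;> simpa [hA'def] using ‹_›
        · intro h
          exact ⟨by simpa [hA'def] using h 0 (by norm_num),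
            by simpa [hA'def] using h 1 le_rfl⟩
      rw [hset, hP 1 A' hA'meas]
      have h0 : A' 0 = A := by simp [hA'def]
      have hchain : ∀ α, chainProb p 1 (fun i => A' (i + 1)) α = p α B := by
        intro α
        show (∫⁻ β in A' 1, chainProb p 0 _ β ∂(p α)) = p α B
        simp [chainProb, hA'def]
      rw [h0]
      exact setLIntegral_congr_fun hA (fun α _ => hchain α)
    · simp [measure_univ]
  -- absolute continuity of m × m w.r.t. the law of (ω₀, ω₁)
  have habs : m.prod m ≪ P.map g := by
    rw [hmap]
    refine Measure.AbsolutelyContinuous.mk fun s hs h0 => ?_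
    rw [Measure.compProd_apply hs,
      lintegral_eq_zero_iff (Kernel.measurable_kernel_prodMk_left hs)] at h0
    have hnull : ∀ᵐ α ∂m, m (Prod.mk α ⁻¹' s) = 0 := by
      refine h0.mono fun α hα => ?_
      have hslice : MeasurableSet (Prod.mk α ⁻¹' s) := measurable_prodMk_left hs
      have hle : C * m (Prod.mk α ⁻¹' s) ≤ p α (Prod.mk α ⁻¹' s) := by
        rw [hdens α, withDensity_apply _ hslice]
        calc C * m (Prod.mk α ⁻¹' s) = ∫⁻ _ in Prod.mk α ⁻¹' s, C ∂m := by
              rw [setLIntegral_const, mul_comm]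
          _ ≤ ∫⁻ β in Prod.mk α ⁻¹' s, k α β ∂m :=
              lintegral_mono fun β => (hbound α β).1
      have hα' : p α (Prod.mk α ⁻¹' s) = 0 := hα
      rw [hα'] at hle
      have := le_antisymm hle (zero_le (a := _))
      rcases mul_eq_zero.1 this with h | h
      · exact absurd h hC0.ne'
      · exact h
    rw [Measure.prod_apply hs]
    calc (∫⁻ α, m (Prod.mk α ⁻¹' s) ∂m) = ∫⁻ _, 0 ∂m := lintegral_congr_ae hnull
      _ = 0 := lintegral_zero
  -- for each B in the π-system, the key identity holds m×m-a.e.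
  have hkey : ∀ B ∈ S, ∀ᵐ z : E × E ∂m.prod m, μa z.1 (f z.1 ⁻¹' B) = μa z.2 B := by
    intro B hB
    have hBm : MeasurableSet B := hSmeas B hB
    have h1 : ∀ᵐ ω ∂P, μa (ω 0) (f (ω 0) ⁻¹' B) = μa (ω 1) B := by
      refine hIP.mono fun ω h => ?_
      rw [← h, Measure.map_apply (hfα _) hBm]
    have hGmeas : MeasurableSet {z : E × E | μa z.1 (f z.1 ⁻¹' B) = μa z.2 B} :=
      MeasureTheory.StronglyMeasurable.measurableSet_eq_fun ((hvmeas B hBm).comp measurable_fst).stronglyMeasurable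
        ((hμmeas B hBm).comp measurable_snd).stronglyMeasurable
    have h2 : ∀ᵐ z : E × E ∂P.map g, μa z.1 (f z.1 ⁻¹' B) = μa z.2 B :=
      (ae_map_iff hg.aemeasurable hGmeas).mpr h1
    exact habs.ae_le h2
  have hall : ∀ᵐ z : E × E ∂m.prod m, ∀ B ∈ S, μa z.1 (f z.1 ⁻¹' B) = μa z.2 B :=
    (ae_ball_iff hScount).mpr hkey
  have hae : ∀ᵐ z : E × E ∂m.prod m, (μa z.1).map (f z.1) = μa z.2 := by
    refine hall.mono fun z hz => ?_
    haveI := hμprob z.1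
    refine meq _ _ (Measure.isProbabilityMeasure_map (hfα z.1).aemeasurable) (hμprob z.2) ?_
    intro B hB
    rw [Measure.map_apply (hfα _) (hSmeas B hB)]
    exact hz B hB
  have h4 : ∀ᵐ α ∂m, ∀ᵐ β ∂m, (μa α).map (f α) = μa β := Measure.ae_ae_of_ae_prod hae
  haveI : (ae m).NeBot := ae_neBot.mpr (IsProbabilityMeasure.ne_zero m)
  obtain ⟨α₀, hα₀⟩ := h4.exists
  refine ⟨(μa α₀).map (f α₀), ?_, ?_, ?_⟩
  · haveI := hμprob α₀
    exact Measure.isProbabilityMeasure_map (hfα α₀).aemeasurable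
  · exact hα₀.mono fun β h => h.symm
  · have hconst : ∀ᵐ β ∂m, μa β = (μa α₀).map (f α₀) := hα₀.mono fun β h => h.symm
    have h5 : ∀ᵐ α ∂m, (μa α).map (f α) = (μa α₀).map (f α₀) := by
      refine h4.mono fun α hα => ?_
      obtain ⟨β, h1, h2⟩ := (hα.and hconst).exists
      rw [h1, h2]
    refine (hconst.and h5).mono fun α ⟨h1, h2⟩ => ?_
    rw [h1] at h2
    exact h2
end
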